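/- arXiv:1105.1726 — 6 statements merged into one kernel-verified Lean document; each statement's English description precedes it below -/
import Mathlib

section
/- Let x ∈ gl(n+1,ℂ) be strictly upper triangular with nonzero entries on the first superdiagonal (hence regular nilpotent). Then the centralizer of x in gl(n+1,ℂ) intersects gl(n,ℂ) (embedded as the upper-left n×n corner, with last row and column zero) trivially: z_{gl(n+1)}(x) ∩ gl(n,ℂ) = 0. -/
open Matrix

/-- The centralizer of a matrix, as a submodule of the matrix algebra. -/
noncomputable def matCentralizer {m : Type*} [Fintype m] [DecidableEq m] (x : Matrix m m ℂ) :
    Submodule ℂ (Matrix m m ℂ) where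
  carrier := {y | x * y = y * x}
  add_mem' := by
    intro a b ha hb
    simp only [Set.mem_setOf_eq] at *
    rw [Matrix.mul_add, Matrix.add_mul, ha, hb]
  zero_mem' := by simp
  smul_mem' := by
    intro c a ha
    simp only [Set.mem_setOf_eq] at *
    rw [Matrix.mul_smul, Matrix.smul_mul, ha]

/-- The upper-left `k × k` corner of an `m × m` matrix. -/
def ulCorner {m k : ℕ} (h : k ≤ m) (x : Matrix (Fin m) (Fin m) ℂ) :
    Matrix (Fin k) (Fin k) ℂ :=
  x.submatrix (Fin.castLE h) (Fin.castLE h)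

/-- The embedding of `gl(m)` into `gl(m+1)` with last row and column zero. -/
def matEmbed {m : ℕ} (z : Matrix (Fin m) (Fin m) ℂ) :
    Matrix (Fin (m + 1)) (Fin (m + 1)) ℂ :=
  Matrix.of fun a b =>
    if ha : (a : ℕ) < m then (if hb : (b : ℕ) < m then z ⟨a, ha⟩ ⟨b, hb⟩ else 0) else 0

/-- If `x ∈ gl(n+1,ℂ)` is strictly upper triangular with nonzero entries on the
first superdiagonal (hence regular nilpotent), then the centralizer of `x` in
`gl(n+1,ℂ)` meets the copy of `gl(n,ℂ)` (matrices with last row and column zero)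
trivially. -/
theorem stmt4 (n : ℕ) (x : Matrix (Fin (n + 1)) (Fin (n + 1)) ℂ)
    (hupper : ∀ i j : Fin (n + 1), (j : ℕ) ≤ (i : ℕ) → x i j = 0)
    (hsd : ∀ i : Fin n, x i.castSucc i.succ ≠ 0) :
    ∀ y : Matrix (Fin (n + 1)) (Fin (n + 1)) ℂ,
      x * y = y * x →
      (∀ i : Fin (n + 1), y i (Fin.last n) = 0) →
      (∀ i : Fin (n + 1), y (Fin.last n) i = 0) →
      y = 0 := by
  intro y hcomm hcol _hrow
  -- core step: if all rows below row `i` vanish, then row `i` vanishes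
  have core : ∀ i : Fin (n + 1),
      (∀ i' : Fin (n + 1), (i : ℕ) < (i' : ℕ) → ∀ j, y i' j = 0) → ∀ j, y i j = 0 := by
    intro i hbelow
    have hxy : ∀ c, (x * y) i c = 0 := by
      intro c
      rw [Matrix.mul_apply]
      apply Finset.sum_eq_zero
      intro k _
      rcases le_or_gt (k : ℕ) (i : ℕ) with h | h
      · rw [hupper i k h, zero_mul]
      · rw [hbelow k h c, mul_zero]
    have hyx : ∀ c, (y * x) i c = 0 := by
      intro c
      rw [← hcomm]
      exact hxy c
    suffices H : ∀ j : ℕ, ∀ hj : j < n + 1, y i ⟨j, hj⟩ = 0 by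
      intro j
      have := H j j.isLt
      simpa using this
    intro j
    induction j using Nat.strong_induction_on with
    | _ j ihj =>
      intro hj
      rcases Nat.lt_or_ge j n with hjn | hjn
      · -- use the commutation relation at column j+1
        have hc := hyx ⟨j + 1, by omega⟩
        rw [Matrix.mul_apply] at hc
        rw [Finset.sum_eq_single (⟨j, hj⟩ : Fin (n + 1))] at hc
        · have hx : x ⟨j, hj⟩ ⟨j + 1, by omega⟩ ≠ 0 := hsd ⟨j, hjn⟩
          exact (mul_eq_zero.mp hc).resolve_right hx
        · intro k _ hk
          rcases Nat.lt_or_ge (k : ℕ) j with hlt | hge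
          · have := ihj (k : ℕ) hlt k.isLt
            simp only [Fin.eta] at this
            rw [this, zero_mul]
          · have hge' : j + 1 ≤ (k : ℕ) := by
              rcases Nat.lt_or_ge j (k : ℕ) with h | h
              · omega
              · exfalso
                apply hk
                apply Fin.ext
                simp
                omega
            rw [hupper k ⟨j + 1, by omega⟩ hge', mul_zero]
        · intro h
          exact absurd (Finset.mem_univ _) h
      · -- j = n : last column
        have : (⟨j, hj⟩ : Fin (n + 1)) = Fin.last n := by
          apply Fin.ext
          simp
          omega
        rw [this]
        exact hcol i
  -- downward induction on rows
  have key : ∀ m : ℕ, ∀ i : Fin (n + 1), n ≤ (i : ℕ) + m → ∀ j, y i j = 0 := by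
    intro m
    induction m with
    | zero =>
      intro i hi
      apply core
      intro i' hi'
      exfalso
      have := i'.isLt
      omega
    | succ m ih =>
      intro i hi
      apply core
      intro i' hi'
      exact ih i' (by omega)
  ext i j
  exact key n i (by omega) j
end

section
/- Let b be the Borel subalgebra of gl(n+1,ℂ) stabilizing the flag e₁ ⊂ ... ⊂ e_{i-1} ⊂ e_{n+1} ⊂ e_i ⊂ ... ⊂ e_n, where 1 < i < n+1 (position i of the flag is spanned by e_{n+1}). Let n = [b,b] be its nilradical and n_n its image under the projection to the upper-left n×n corner. Then the intersection z_{gl(n)}(n_n) ∩ z_{gl(n+1)}(n) is nonzero; in fact it contains the root space for the root ε₁ − ε_n, i.e., ℂ·E_{1,n}. -/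
open Matrix

/-- The entry-pattern (written `1`-indexed in the paper, here `0`-indexed) of the
Borel subalgebra of `gl(n+1,ℂ)` stabilizing the flag
`e₁ ⊂ … ⊂ e_{i-1} ⊂ e_{n+1} ⊂ e_i ⊂ … ⊂ e_n` (with `e_{n+1}` in position `i`):
the entry `(k,j)` is allowed precisely when
`(k ≤ j ≤ n ∧ k ≤ i-1)` or `(i ≤ k ≤ j ≤ n)` or `(k = n+1 ∧ j ≥ i)` or
`(j = n+1 ∧ k ≤ i-1)` or `k = j`. -/
def allowedEntry (n i : ℕ) (k j : Fin (n + 1)) : Prop :=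
  ((k : ℕ) ≤ (j : ℕ) ∧ (j : ℕ) < n ∧ (k : ℕ) + 2 ≤ i) ∨
  (i ≤ (k : ℕ) + 1 ∧ (k : ℕ) ≤ (j : ℕ) ∧ (j : ℕ) < n) ∨
  ((k : ℕ) = n ∧ i ≤ (j : ℕ) + 1) ∨
  ((j : ℕ) = n ∧ (k : ℕ) + 2 ≤ i) ∨
  k = j

/-- The Borel subalgebra of `gl(n+1,ℂ)` stabilizing the flag
`e₁ ⊂ … ⊂ e_{i-1} ⊂ e_{n+1} ⊂ e_i ⊂ … ⊂ e_n`. -/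
def borelSet (n i : ℕ) : Set (Matrix (Fin (n + 1)) (Fin (n + 1)) ℂ) :=
  {x | ∀ k j : Fin (n + 1), ¬ allowedEntry n i k j → x k j = 0}

/-- The nilradical `[b,b]` of the Borel subalgebra `borelSet n i`:
the allowed strictly off-diagonal part. -/
def nilradSet (n i : ℕ) : Set (Matrix (Fin (n + 1)) (Fin (n + 1)) ℂ) :=
  {x | (∀ k j : Fin (n + 1), ¬ allowedEntry n i k j → x k j = 0) ∧ ∀ k, x k k = 0}

theorem stmt6_aux (n i : ℕ) (h1 : 1 < i) (h2 : i < n + 1) (K : Fin (n + 1))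
    (hK : (K : ℕ) = n - 1) :
    Matrix.single (0 : Fin (n + 1)) K (1 : ℂ) ≠ 0 ∧
    (∀ j : Fin (n + 1),
      Matrix.single (0 : Fin (n + 1)) K (1 : ℂ) j (Fin.last n) = 0 ∧
      Matrix.single (0 : Fin (n + 1)) K (1 : ℂ) (Fin.last n) j = 0) ∧
    (∀ x ∈ nilradSet n i,
      Matrix.single (0 : Fin (n + 1)) K (1 : ℂ) * x =
        x * Matrix.single (0 : Fin (n + 1)) K (1 : ℂ)) ∧
    (∀ x ∈ nilradSet n i,
      ulCorner (Nat.le_succ n) (Matrix.single (0 : Fin (n + 1)) K (1 : ℂ)) *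
          ulCorner (Nat.le_succ n) x =
        ulCorner (Nat.le_succ n) x *
          ulCorner (Nat.le_succ n) (Matrix.single (0 : Fin (n + 1)) K (1 : ℂ))) := by
  have hn : 2 ≤ n := by omega
  have h0 : ((0 : Fin (n + 1)) : ℕ) = 0 := rfl
  -- row `K = n-1` of any element of the nilradical vanishes
  have hrow : ∀ x ∈ nilradSet n i, ∀ b, x K b = 0 := by
    rintro x ⟨hoff, hdiag⟩ b
    by_cases hab : allowedEntry n i K b
    · rcases hab with ⟨h, h', h''⟩ | ⟨h, h', h''⟩ | ⟨h, h'⟩ | ⟨h, h'⟩ | h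
      · omega
      · have hb : b = K := Fin.ext (by omega)
        rw [hb]; exact hdiag K
      · omega
      · omega
      · rw [h]; exact hdiag b
    · exact hoff K b hab
  -- column `0` of any element of the nilradical vanishes
  have hcol : ∀ x ∈ nilradSet n i, ∀ k, x k (0 : Fin (n + 1)) = 0 := by
    rintro x ⟨hoff, hdiag⟩ k
    by_cases hab : allowedEntry n i k 0
    · rcases hab with ⟨h, h', h''⟩ | ⟨h, h', h''⟩ | ⟨h, h'⟩ | ⟨h, h'⟩ | h
      · have hk : k = (0 : Fin (n + 1)) := Fin.ext (by omega)
        rw [hk]; exact hdiag 0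
      · have hk : k = (0 : Fin (n + 1)) := Fin.ext (by omega)
        rw [hk]; exact hdiag 0
      · omega
      · omega
      · rw [h]; exact hdiag 0
    · exact hoff k 0 hab
  have hE0x : ∀ x ∈ nilradSet n i,
      Matrix.single (0 : Fin (n + 1)) K (1 : ℂ) * x = 0 := by
    intro x hx
    ext a b
    rw [Matrix.mul_apply, Matrix.zero_apply]
    apply Finset.sum_eq_zero
    intro c _
    rcases eq_or_ne c K with rfl | hc
    · rw [hrow x hx b, mul_zero]
    · simp [Matrix.single, Ne.symm hc]
  have hxE0 : ∀ x ∈ nilradSet n i,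
      x * Matrix.single (0 : Fin (n + 1)) K (1 : ℂ) = 0 := by
    intro x hx
    ext a b
    rw [Matrix.mul_apply, Matrix.zero_apply]
    apply Finset.sum_eq_zero
    intro c _
    rcases eq_or_ne c (0 : Fin (n + 1)) with rfl | hc
    · rw [hcol x hx a, zero_mul]
    · simp [Matrix.single, Ne.symm hc]
  have hKl : K ≠ Fin.last n := by
    intro h; rw [Fin.ext_iff, Fin.val_last] at h; omega
  have h0l : (0 : Fin (n + 1)) ≠ Fin.last n := by
    intro h; rw [Fin.ext_iff, Fin.val_last, h0] at h; omega
  refine ⟨?_, ?_, ?_, ?_⟩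
  · intro h
    have := congrFun (congrFun h 0) K
    simp [Matrix.single] at this
  · intro j
    constructor
    · simp [Matrix.single, hKl]
    · simp [Matrix.single, h0l]
  · intro x hx
    rw [hE0x x hx, hxE0 x hx]
  · intro x hx
    ext a b
    simp only [ulCorner, Matrix.mul_apply, Matrix.submatrix_apply]
    rw [Finset.sum_eq_zero, Finset.sum_eq_zero]
    · intro c _
      rcases eq_or_ne (Fin.castLE (Nat.le_succ n) c) (0 : Fin (n + 1)) with hc | hc
      · rw [hc, hcol x hx, zero_mul]
      · simp [Matrix.single, Ne.symm hc]
    · intro c _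
      rcases eq_or_ne (Fin.castLE (Nat.le_succ n) c) K with hc | hc
      · rw [hc, hrow x hx, mul_zero]
      · simp [Matrix.single, Ne.symm hc]

/-- Let `b` be the Borel subalgebra of `gl(n+1,ℂ)` stabilizing the flag
`e₁ ⊂ … ⊂ e_{i-1} ⊂ e_{n+1} ⊂ e_i ⊂ … ⊂ e_n` with `1 < i < n+1`, with
nilradical `𝔫`, and let `𝔫ₙ` be the projection of `𝔫` to the upper-left
`n × n` corner.  Then `z_{gl(n)}(𝔫ₙ) ∩ z_{gl(n+1)}(𝔫)` is nonzero: it contains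
the matrix unit `E_{1,n}` (zero-indexed `E_{0,n-1}`), which is a nonzero element
of the embedded `gl(n,ℂ)` centralizing `𝔫`, whose corner centralizes `𝔫ₙ`. -/
theorem stmt6 (n i : ℕ) (h1 : 1 < i) (h2 : i < n + 1) :
    Matrix.single (0 : Fin (n + 1)) (⟨n - 1, by omega⟩ : Fin (n + 1)) (1 : ℂ) ≠ 0 ∧
    (∀ j : Fin (n + 1),
      Matrix.single (0 : Fin (n + 1)) (⟨n - 1, by omega⟩ : Fin (n + 1)) (1 : ℂ) j (Fin.last n) = 0 ∧
      Matrix.single (0 : Fin (n + 1)) (⟨n - 1, by omega⟩ : Fin (n + 1)) (1 : ℂ) (Fin.last n) j = 0) ∧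
    (∀ x ∈ nilradSet n i,
      Matrix.single (0 : Fin (n + 1)) (⟨n - 1, by omega⟩ : Fin (n + 1)) (1 : ℂ) * x =
        x * Matrix.single (0 : Fin (n + 1)) (⟨n - 1, by omega⟩ : Fin (n + 1)) (1 : ℂ)) ∧
    (∀ x ∈ nilradSet n i,
      ulCorner (Nat.le_succ n) (Matrix.single (0 : Fin (n + 1)) (⟨n - 1, by omega⟩ : Fin (n + 1)) (1 : ℂ)) *
          ulCorner (Nat.le_succ n) x =
        ulCorner (Nat.le_succ n) x *
          ulCorner (Nat.le_succ n) (Matrix.single (0 : Fin (n + 1)) (⟨n - 1, by omega⟩ : Fin (n + 1)) (1 : ℂ))) := by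
  exact stmt6_aux n i h1 h2 _ rfl
end

section
/- Let g ∈ GL(n+1,ℂ) be the matrix with 1's on the diagonal, a 1 in entry (n+1,1), and 0 elsewhere. Let x = g u g⁻¹ where u is strictly upper triangular with all first superdiagonal entries a_{i,i+1} nonzero. Let y be the matrix obtained from x by setting the last column and last row entries to their block-diagonal projection (i.e., y_{k,n+1} = 0 and y_{n+1,j} = 0 for k,j ≤ n, keeping y_{n+1,n+1} = x_{n+1,n+1} and y_n = x_n). Then the upper-left n×n corner of y has determinant (-1)^n ∏_{i=1}^{n} a_{i,i+1} ≠ 0; in particular y is not nilpotent. -/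
open Matrix

/-- Let `g ∈ GL(n+1,ℂ)` have `1`s on the diagonal, a `1` in entry `(n+1,1)` and
`0` elsewhere, and let `x = g u g⁻¹` with `u` strictly upper triangular with all
first superdiagonal entries nonzero.  Let `y` be the block diagonal part of `x`
(last row and column zeroed out except the `(n+1,n+1)` entry).  Then the
upper-left `n × n` corner of `y` has determinant `(-1)ⁿ ∏ u_{i,i+1} ≠ 0`; in
particular `y` is not nilpotent. -/
theorem stmt9 (n : ℕ) (hn : 0 < n)
    (u : Matrix (Fin (n + 1)) (Fin (n + 1)) ℂ)
    (hupper : ∀ i j : Fin (n + 1), (j : ℕ) ≤ (i : ℕ) → u i j = 0)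
    (hsd : ∀ i : Fin n, u i.castSucc i.succ ≠ 0)
    (g x y : Matrix (Fin (n + 1)) (Fin (n + 1)) ℂ)
    (hg : g = 1 + Matrix.single (Fin.last n) (0 : Fin (n + 1)) (1 : ℂ))
    (hx : x = g * u * g⁻¹)
    (hy : y = Matrix.of fun k j =>
      if k = Fin.last n ∧ j ≠ Fin.last n then 0
      else if j = Fin.last n ∧ k ≠ Fin.last n then 0
      else x k j) :
    (ulCorner (Nat.le_succ n) y).det = (-1) ^ n * ∏ i : Fin n, u i.castSucc i.succ ∧
    (ulCorner (Nat.le_succ n) y).det ≠ 0 ∧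
    ¬ IsNilpotent y := by
  unfold ulCorner
  obtain ⟨m, rfl⟩ := Nat.exists_eq_succ_of_ne_zero hn.ne'
  set E := Matrix.single (Fin.last (m+1)) (0 : Fin (m+2)) (1 : ℂ) with hE
  have h0l : (0 : Fin (m+2)) ≠ Fin.last (m+1) := by
    simp [Fin.ext_iff, Fin.val_last]
  have hEE : E * E = 0 := Matrix.single_mul_single_of_ne _ _ _ _ h0l _
  have hginv : g⁻¹ = 1 - E := by
    apply Matrix.inv_eq_right_inv
    rw [hg]
    have : (1 + E) * (1 - E) = 1 + E - E - E * E := by noncomm_ring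
    rw [this, hEE]; abel
  have hxe : ∀ a b : Fin (m+2), a ≠ Fin.last (m+1) →
      x a b = u a b - (if b = 0 then u a (Fin.last (m+1)) else 0) := by
    intro a b ha
    have hrw : x = u + E * u - (u * E + E * (u * E)) := by
      rw [hx, hginv, hg]; noncomm_ring
    rw [hrw]
    simp only [Matrix.sub_apply, Matrix.add_apply]
    rw [Matrix.single_mul_apply_of_ne _ _ _ _ _ ha,
        Matrix.single_mul_apply_of_ne _ _ _ _ _ ha]
    by_cases hb : b = 0
    · subst hb; rw [Matrix.mul_single_apply_same]; simp
    · rw [Matrix.mul_single_apply_of_ne _ _ _ _ _ hb]; simp [hb]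
  have hAe : ∀ k j : Fin (m+1),
      y (Fin.castLE (Nat.le_succ (m+1)) k) (Fin.castLE (Nat.le_succ (m+1)) j) =
      u k.castSucc (Fin.castLE (Nat.le_succ (m+1)) j)
        - (if Fin.castLE (Nat.le_succ (m+1)) j = 0 then u k.castSucc (Fin.last (m+1)) else 0) := by
    intro k j
    have hk : Fin.castLE (Nat.le_succ (m+1)) k ≠ Fin.last (m+1) := by
      intro h
      have h' := congrArg Fin.val h
      simp only [Fin.coe_castLE, Fin.val_last] at h'
      omega
    have hj : Fin.castLE (Nat.le_succ (m+1)) j ≠ Fin.last (m+1) := by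
      intro h
      have h' := congrArg Fin.val h
      simp only [Fin.coe_castLE, Fin.val_last] at h'
      omega
    rw [hy]
    simp only [Matrix.of_apply]
    rw [if_neg (fun h => hk h.1), if_neg (fun h => hj h.1)]
    exact hxe _ _ hk
  set A := y.submatrix (Fin.castLE (Nat.le_succ (m+1))) (Fin.castLE (Nat.le_succ (m+1))) with hA
  have hMtri : (A.submatrix id (finRotate (m+1))).BlockTriangular id := by
    intro i j hij
    have hij' : (j:ℕ) < (i:ℕ) := hij
    have hjl : j ≠ Fin.last m := by
      intro h; subst h
      have := i.isLt; simp [Fin.val_last] at hij'; omega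
    show y (Fin.castLE (Nat.le_succ (m+1)) i)
        (Fin.castLE (Nat.le_succ (m+1)) (finRotate (m+1) j)) = 0
    rw [finRotate_succ_apply, hAe]
    have hval : ((Fin.castLE (Nat.le_succ (m+1)) (j+1)) : ℕ) = (j:ℕ)+1 := by
      simp [Fin.val_add_one, hjl]
    rw [if_neg (by simp only [Fin.ext_iff, hval]; simp), sub_zero]
    apply hupper
    simp only [hval, Fin.coe_castSucc]
    omega
  have hMdiag : ∀ i : Fin (m+1), (A.submatrix id (finRotate (m+1))) i i
      = (if i = Fin.last m then (-1:ℂ) else 1) * u i.castSucc i.succ := by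
    intro i
    show y (Fin.castLE (Nat.le_succ (m+1)) i)
        (Fin.castLE (Nat.le_succ (m+1)) (finRotate (m+1) i)) = _
    rw [finRotate_succ_apply, hAe]
    by_cases hil : i = Fin.last m
    · subst hil
      have h1 : (Fin.last m + 1 : Fin (m+1)) = 0 := by
        simp [Fin.ext_iff, Fin.val_add_one]
      rw [h1]
      rw [if_pos (by simp [Fin.ext_iff])]
      have hz : u (Fin.last m).castSucc (Fin.castLE (Nat.le_succ (m+1)) (0 : Fin (m+1))) = 0 :=
        hupper _ _ (by simp)
      rw [hz, zero_sub, if_pos rfl, Fin.succ_last]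
      ring
    · have hval : ((Fin.castLE (Nat.le_succ (m+1)) (i+1)) : ℕ) = (i:ℕ)+1 := by
        simp [Fin.val_add_one, hil]
      rw [if_neg (by simp only [Fin.ext_iff, hval]; simp), sub_zero, if_neg hil, one_mul]
      congr 1
      exact Fin.ext (by rw [hval, Fin.val_succ])
  have hMdet : (A.submatrix id (finRotate (m+1))).det
      = - ∏ i : Fin (m+1), u i.castSucc i.succ := by
    rw [Matrix.det_of_upperTriangular hMtri]
    calc ∏ i, (A.submatrix id (finRotate (m+1))) i i
        = ∏ i : Fin (m+1), (if i = Fin.last m then (-1:ℂ) else 1) * u i.castSucc i.succ :=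
          Finset.prod_congr rfl (fun i _ => hMdiag i)
      _ = _ := by
          rw [Finset.prod_mul_distrib,
            Finset.prod_ite_eq' Finset.univ (Fin.last m) (fun _ => (-1:ℂ))]
          simp
  have hdetA : A.det = (-1:ℂ)^(m+1) * ∏ i : Fin (m+1), u i.castSucc i.succ := by
    have h1 := Matrix.det_permute' (finRotate (m+1)) A
    rw [sign_finRotate, Nat.add_sub_cancel, hMdet] at h1
    have h2 : ((((-1:ℤˣ)^m : ℤˣ) : ℤ) : ℂ) = (-1)^m := by push_cast; ring
    rw [h2] at h1
    have hsq : ((-1:ℂ)^m) * ((-1:ℂ)^m) = 1 := by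
      rw [← pow_add]; exact Even.neg_one_pow ⟨m, rfl⟩
    have : ((-1:ℂ)^m) * (- ∏ i : Fin (m+1), u i.castSucc i.succ)
        = ((-1:ℂ)^m) * (((-1:ℂ)^m) * A.det) := by rw [← h1]
    rw [← mul_assoc, hsq, one_mul] at this
    rw [← this, pow_succ]; ring
  have hprod : (∏ i : Fin (m+1), u i.castSucc i.succ) ≠ 0 :=
    Finset.prod_ne_zero_iff.mpr (fun i _ => hsd i)
  have hAne : A.det ≠ 0 := by
    rw [hdetA]
    exact mul_ne_zero (pow_ne_zero _ (by norm_num)) hprod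
  refine ⟨hdetA, hAne, ?_⟩
  have hycol : ∀ a, a ≠ Fin.last (m+1) → y a (Fin.last (m+1)) = 0 := by
    intro a ha
    rw [hy]
    simp [ha]
  have hcorner : ∀ z w : Matrix (Fin (m+2)) (Fin (m+2)) ℂ,
      (∀ a, a ≠ Fin.last (m+1) → z a (Fin.last (m+1)) = 0) →
      (z * w).submatrix (Fin.castLE (Nat.le_succ (m+1))) (Fin.castLE (Nat.le_succ (m+1)))
        = z.submatrix (Fin.castLE (Nat.le_succ (m+1))) (Fin.castLE (Nat.le_succ (m+1)))
          * w.submatrix (Fin.castLE (Nat.le_succ (m+1))) (Fin.castLE (Nat.le_succ (m+1))) := by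
    intro z w hz
    ext k j
    rw [Matrix.submatrix_apply, Matrix.mul_apply, Matrix.mul_apply, Fin.sum_univ_castSucc]
    have hk : Fin.castLE (Nat.le_succ (m+1)) k ≠ Fin.last (m+1) := by
      intro h
      have h' := congrArg Fin.val h
      simp only [Fin.coe_castLE, Fin.val_last] at h'
      omega
    rw [hz _ hk, zero_mul, add_zero]
    rfl
  have hpow : ∀ N : ℕ, (y^(N+1)).submatrix (Fin.castLE (Nat.le_succ (m+1)))
      (Fin.castLE (Nat.le_succ (m+1))) = A ^ (N+1) := by
    intro N
    induction N with
    | zero => rw [pow_one, ← hA, pow_one]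
    | succ N ih =>
        rw [pow_succ' y, hcorner y _ hycol, ih, ← hA, ← pow_succ']
  rintro ⟨N, hN⟩
  cases N with
  | zero =>
      rw [pow_zero] at hN
      have h00 := congrFun (congrFun hN 0) 0
      simp [Matrix.one_apply] at h00
  | succ N =>
      have h0 : A ^ (N+1) = 0 := by rw [← hpow N, hN]; simp
      have hd : A.det ^ (N+1) = 0 := by
        rw [← Matrix.det_pow, h0]
        exact Matrix.det_zero
      exact hAne ((pow_eq_zero_iff (Nat.succ_ne_zero N)).mp hd)
end

section
/- Let x ∈ gl(n+1,ℂ) be in the conjugate b = g·(upper triangular)·g⁻¹ of the upper triangular Borel, where g is the identity matrix modified to have a 1 in entry (n+1,1), and suppose x is regular nilpotent. Then π_k(x), the block-diagonal part of x with respect to the splitting gl(n,ℂ) ⊕ gl(1,ℂ), is not nilpotent. -/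
open Matrix

lemma matEmbed_apply_castSucc {m : ℕ} (z : Matrix (Fin m) (Fin m) ℂ) (i j : Fin m) :
    matEmbed z i.castSucc j.castSucc = z i j := by
  simp [matEmbed, i.is_lt, j.is_lt]

lemma matEmbed_apply_last_left {m : ℕ} (z : Matrix (Fin m) (Fin m) ℂ) (b : Fin (m+1)) :
    matEmbed z (Fin.last m) b = 0 := by
  simp [matEmbed]

lemma matEmbed_apply_last_right {m : ℕ} (z : Matrix (Fin m) (Fin m) ℂ) (a : Fin (m+1)) :
    matEmbed z a (Fin.last m) = 0 := by
  simp [matEmbed]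

lemma matEmbed_mul {m : ℕ} (z w : Matrix (Fin m) (Fin m) ℂ) :
    matEmbed z * matEmbed w = matEmbed (z * w) := by
  ext a b
  rcases eq_or_ne a (Fin.last m) with ha | ha
  · subst ha
    rw [matEmbed_apply_last_left, mul_apply]
    apply Finset.sum_eq_zero
    intro k _
    rw [matEmbed_apply_last_left, zero_mul]
  · obtain ⟨i, rfl⟩ := Fin.exists_castSucc_eq.mpr ha
    rcases eq_or_ne b (Fin.last m) with hb | hb
    · subst hb
      rw [matEmbed_apply_last_right, mul_apply]
      apply Finset.sum_eq_zero
      intro k _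
      rw [matEmbed_apply_last_right, mul_zero]
    · obtain ⟨j, rfl⟩ := Fin.exists_castSucc_eq.mpr hb
      rw [mul_apply, matEmbed_apply_castSucc, mul_apply, Fin.sum_univ_castSucc,
        matEmbed_apply_last_right, zero_mul, add_zero]
      exact Finset.sum_congr rfl fun k _ => by rw [matEmbed_apply_castSucc,
        matEmbed_apply_castSucc]

lemma matEmbed_mul_std {m : ℕ} (z : Matrix (Fin m) (Fin m) ℂ) (c : ℂ) :
    matEmbed z * Matrix.single (Fin.last m) (Fin.last m) c = 0 := by
  ext a b
  rcases eq_or_ne b (Fin.last m) with hb | hb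
  · subst hb
    rw [Matrix.mul_single_apply_same, matEmbed_apply_last_right, zero_mul]
    rfl
  · simp [Matrix.mul_single_apply_of_ne, hb]

lemma std_mul_matEmbed {m : ℕ} (z : Matrix (Fin m) (Fin m) ℂ) (c : ℂ) :
    Matrix.single (Fin.last m) (Fin.last m) c * matEmbed z = 0 := by
  ext a b
  rcases eq_or_ne a (Fin.last m) with ha | ha
  · subst ha
    rw [Matrix.single_mul_apply_same, matEmbed_apply_last_left, mul_zero]
    rfl
  · simp [Matrix.single_mul_apply_of_ne, ha]

lemma embed_std_pow {m : ℕ} (A : Matrix (Fin m) (Fin m) ℂ) (c : ℂ) (k : ℕ) :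
    (matEmbed A + Matrix.single (Fin.last m) (Fin.last m) c) ^ (k + 1)
      = matEmbed (A ^ (k + 1))
        + Matrix.single (Fin.last m) (Fin.last m) (c ^ (k + 1)) := by
  induction k with
  | zero => simp
  | succ k ih =>
      rw [pow_succ, ih, add_mul, mul_add, mul_add, matEmbed_mul, matEmbed_mul_std,
        std_mul_matEmbed, Matrix.single_mul_single_same, ← pow_succ, ← pow_succ]
      abel

/-- Let `x` be a regular nilpotent element of the Borel subalgebra
`b = g · (upper triangular) · g⁻¹` of `gl(n+1,ℂ)`, where `g` is the identity
matrix modified to have a `1` in entry `(n+1,1)`; i.e. `x = g u g⁻¹` with `u`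
strictly upper triangular with nonzero first superdiagonal.  Then `π_k(x)`, the
block diagonal part of `x` with respect to the splitting `gl(n,ℂ) ⊕ gl(1,ℂ)`,
is not nilpotent. -/
theorem stmt10 (n : ℕ) (hn : 0 < n)
    (u : Matrix (Fin (n + 1)) (Fin (n + 1)) ℂ)
    (hupper : ∀ i j : Fin (n + 1), (j : ℕ) ≤ (i : ℕ) → u i j = 0)
    (hsd : ∀ i : Fin n, u i.castSucc i.succ ≠ 0)
    (g x : Matrix (Fin (n + 1)) (Fin (n + 1)) ℂ)
    (hg : g = 1 + Matrix.single (Fin.last n) (0 : Fin (n + 1)) (1 : ℂ))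
    (hx : x = g * u * g⁻¹) :
    ¬ IsNilpotent (Matrix.of fun k j : Fin (n + 1) =>
      if k = Fin.last n ∧ j ≠ Fin.last n then 0
      else if j = Fin.last n ∧ k ≠ Fin.last n then 0
      else x k j) := by
  rintro ⟨k, hk⟩
  set E := Matrix.single (Fin.last n) (0 : Fin (n + 1)) (1 : ℂ) with hE
  have h0last : (0 : Fin (n + 1)) ≠ Fin.last n := by
    simp only [ne_eq, Fin.ext_iff, Fin.val_last, Fin.val_zero]
    omega
  have hginv : g⁻¹ = 1 - E := by
    apply Matrix.inv_eq_right_inv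
    have hEE : E * E = 0 := Matrix.single_mul_single_of_ne _ _ _ _ h0last _
    have hexp : (1 + E) * (1 - E) = 1 + E - E - E * E := by noncomm_ring
    rw [hg, hexp, hEE, sub_zero, add_sub_cancel_right]
  have hxE : x = u + E * u - u * E - E * (u * E) := by
    rw [hx, hginv, hg]; noncomm_ring
  -- entry formulas
  have hxne : ∀ a b : Fin (n + 1), a ≠ Fin.last n →
      x a b = u a b - (if b = 0 then u a (Fin.last n) else 0) := by
    intro a b ha
    rw [hxE]
    simp only [Matrix.sub_apply, Matrix.add_apply]
    rw [Matrix.single_mul_apply_of_ne _ _ _ _ _ ha,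
      Matrix.single_mul_apply_of_ne _ _ _ _ _ ha]
    by_cases hb : b = 0
    · subst hb
      rw [Matrix.mul_single_apply_same, if_pos rfl, mul_one]
      ring
    · rw [Matrix.mul_single_apply_of_ne _ _ _ _ _ hb, if_neg hb]
      ring
  have hxll : x (Fin.last n) (Fin.last n) = u 0 (Fin.last n) := by
    rw [hxE]
    simp only [Matrix.sub_apply, Matrix.add_apply]
    rw [Matrix.single_mul_apply_same, Matrix.single_mul_apply_same,
      Matrix.mul_single_apply_of_ne _ _ _ _ _ (Ne.symm h0last),
      Matrix.mul_single_apply_of_ne _ _ _ _ _ (Ne.symm h0last),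
      hupper (Fin.last n) (Fin.last n) le_rfl]
    ring
  set A : Matrix (Fin n) (Fin n) ℂ :=
    Matrix.of fun i j => x i.castSucc j.castSucc with hA
  have hM : (Matrix.of fun k j : Fin (n + 1) =>
      if k = Fin.last n ∧ j ≠ Fin.last n then 0
      else if j = Fin.last n ∧ k ≠ Fin.last n then 0
      else x k j)
      = matEmbed A + Matrix.single (Fin.last n) (Fin.last n)
          (x (Fin.last n) (Fin.last n)) := by
    ext a b
    rw [Matrix.add_apply, Matrix.of_apply]
    rcases eq_or_ne a (Fin.last n) with ha | ha
    · subst ha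
      rcases eq_or_ne b (Fin.last n) with hb | hb
      · subst hb
        rw [matEmbed_apply_last_left]
        simp [Matrix.single]
      · rw [matEmbed_apply_last_left]
        simp [Matrix.single, hb, Ne.symm hb]
    · obtain ⟨i, rfl⟩ := Fin.exists_castSucc_eq.mpr ha
      rcases eq_or_ne b (Fin.last n) with hb | hb
      · subst hb
        rw [matEmbed_apply_last_right]
        simp [Matrix.single, ha, Ne.symm ha]
      · obtain ⟨j, rfl⟩ := Fin.exists_castSucc_eq.mpr hb
        rw [matEmbed_apply_castSucc]
        simp [Matrix.single, ha, hb, Ne.symm ha, Ne.symm hb, hA]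
  rw [hM] at hk
  have hk1 : (matEmbed A + Matrix.single (Fin.last n) (Fin.last n)
      (x (Fin.last n) (Fin.last n))) ^ (k + 1) = 0 := by
    rw [pow_succ, hk, zero_mul]
  rw [embed_std_pow] at hk1
  have hAn : A ^ (k + 1) = 0 := by
    ext i j
    have h := congrFun (congrFun hk1 i.castSucc) j.castSucc
    rw [Matrix.add_apply, matEmbed_apply_castSucc] at h
    simpa [Matrix.single, (Fin.castSucc_lt_last i).ne'] using h
  haveI : Nonempty (Fin n) := Fin.pos_iff_nonempty.mp hn
  have hdet : A.det = 0 := by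
    have h := congrArg Matrix.det hAn
    rw [Matrix.det_pow, Matrix.det_zero] at h
    exact pow_eq_zero_iff (Nat.succ_ne_zero k) |>.mp h
  -- now show det A ≠ 0
  obtain ⟨m, rfl⟩ : ∃ m, n = m + 1 := ⟨n - 1, by omega⟩
  have hA0 : ∀ i : Fin (m + 1), A i 0 = - u i.castSucc (Fin.last (m + 1)) := by
    intro i
    have : A i 0 = x i.castSucc (0 : Fin (m + 1)).castSucc := rfl
    rw [this, Fin.castSucc_zero, hxne _ _ (Fin.castSucc_lt_last i).ne, if_pos rfl,
      hupper i.castSucc 0 (Nat.zero_le _)]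
    ring
  have hAs : ∀ (i j : Fin (m + 1)), j ≠ 0 → A i j = u i.castSucc j.castSucc := by
    intro i j hj
    have : A i j = x i.castSucc j.castSucc := rfl
    rw [this, hxne _ _ (Fin.castSucc_lt_last i).ne,
      if_neg (by simpa [Fin.castSucc_eq_zero_iff] using hj), sub_zero]
  have hsum : A.det = (-1) ^ ((Fin.last m : ℕ)) * A (Fin.last m) 0 *
      (A.submatrix (Fin.last m).succAbove Fin.succ).det := by
    rw [Matrix.det_succ_column_zero]
    apply Finset.sum_eq_single
    · intro i _ hi
      have him : (i : ℕ) < m := lt_of_le_of_ne (Nat.lt_succ_iff.mp i.is_lt)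
        (fun h => hi (Fin.ext h))
      have hm : 0 < m := Nat.pos_of_ne_zero (by omega)
      have hz : (A.submatrix i.succAbove Fin.succ).det = 0 := by
        apply Matrix.det_eq_zero_of_row_eq_zero ⟨m - 1, by omega⟩
        intro s
        rw [Matrix.submatrix_apply]
        have hrow : i.succAbove ⟨m - 1, by omega⟩ = Fin.last m := by
          rw [Fin.succAbove_of_le_castSucc]
          · ext; simp [Fin.val_succ]; omega
          · rw [Fin.le_castSucc_iff]
            exact Fin.lt_def.mpr (by simp; omega)
        rw [hrow, hAs _ _ (Fin.succ_ne_zero s)]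
        apply hupper
        simp only [Fin.coe_castSucc, Fin.val_succ, Fin.val_last]
        omega
      rw [hz, mul_zero]
    · intro h; exact absurd (Finset.mem_univ _) h
  have hB : ∀ r s : Fin m, A.submatrix (Fin.last m).succAbove Fin.succ r s
      = A r.castSucc s.succ := by
    intro r s
    rw [Matrix.submatrix_apply, Fin.succAbove_last]
  have hBdet : (A.submatrix (Fin.last m).succAbove Fin.succ).det
      = ∏ r : Fin m, u (r.castSucc.castSucc) (r.castSucc.succ) := by
    rw [Matrix.det_of_upperTriangular]
    · apply Finset.prod_congr rfl
      intro r _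
      rw [hB, hAs _ _ (Fin.succ_ne_zero r), Fin.succ_castSucc]
    · intro i j hij
      rw [hB, hAs _ _ (Fin.succ_ne_zero j)]
      apply hupper
      simp only [Fin.coe_castSucc, Fin.val_succ]
      exact hij
  rw [hsum, hBdet] at hdet
  have hlast : A (Fin.last m) 0 ≠ 0 := by
    rw [hA0, ← Fin.succ_last]
    simpa using hsd (Fin.last m)
  have hprod : (∏ r : Fin m, u (r.castSucc.castSucc) (r.castSucc.succ)) ≠ 0 := by
    rw [Finset.prod_ne_zero_iff]
    intro r _
    exact hsd r.castSucc
  exact (mul_ne_zero (mul_ne_zero (pow_ne_zero _ (neg_ne_zero.mpr one_ne_zero)) hlast)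
    hprod) hdet
end

section
/- Let v = w u_α σ ∈ GL(n+1,ℂ), where w is the permutation matrix of the cycle (n+1, n, ..., i), σ is the permutation matrix of the cycle (i+1, i+2, ..., j), and u_α is the matrix acting by e_i ↦ e_i + e_{i+1}, e_{i+1} ↦ -e_i + e_{i+1}, e_k ↦ e_k otherwise, for 1 ≤ i < j ≤ n+1. Let θ be conjugation by c = diag(1,...,1,-1). Then v⁻¹ θ(v) = τ_{ij} t, where τ_{ij} is the permutation matrix of the transposition (i j) and t is a diagonal matrix with t² = I. -/
open Matrix

/-- matrix of a permutation: entry (a,b) is 1 iff a = π b. -/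
def permMat {N : ℕ} (π : Equiv.Perm (Fin N)) : Matrix (Fin N) (Fin N) ℂ :=
  Matrix.of fun a b => if a = π b then 1 else 0

lemma mul_permMat {N : ℕ} (M : Matrix (Fin N) (Fin N) ℂ) (π : Equiv.Perm (Fin N)) :
    M * permMat π = Matrix.of fun a b => M a (π b) := by
  ext a b
  simp only [mul_apply, permMat, of_apply, mul_ite, mul_one, mul_zero]
  rw [Finset.sum_ite_eq' Finset.univ (π b) (fun k => M a k)]
  simp

lemma permMat_mul {N : ℕ} (M : Matrix (Fin N) (Fin N) ℂ) (π : Equiv.Perm (Fin N)) :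
    permMat π * M = Matrix.of fun a b => M (π.symm a) b := by
  ext a b
  simp only [mul_apply, permMat, of_apply, ite_mul, one_mul, zero_mul]
  have : ∀ k : Fin N, (a = π k) = (k = π.symm a) := by
    intro k; simp [Equiv.eq_symm_apply, eq_comm]
  simp only [this]
  rw [Finset.sum_ite_eq' Finset.univ (π.symm a) (fun k => M k b)]
  simp

lemma permMat_mul_permMat {N : ℕ} (π ρ : Equiv.Perm (Fin N)) :
    permMat π * permMat ρ = permMat (π * ρ) := by
  rw [mul_permMat]
  ext a b
  simp [permMat]
  rfl

lemma permMat_one {N : ℕ} : permMat (1 : Equiv.Perm (Fin N)) = 1 := by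
  ext a b
  simp [permMat, one_apply, eq_comm]
  rfl

noncomputable def permMatInvertible {N : ℕ} (π : Equiv.Perm (Fin N)) : Invertible (permMat π) :=
  invertibleOfRightInverse _ (permMat π⁻¹) (by
    rw [permMat_mul_permMat, mul_inv_cancel, permMat_one])

/-- the cycle (n+1, n, ..., i) in 1-indexed notation; 0-indexed: i-1 ↦ n, b ↦ b-1 for b > i-1. -/
def pw (n i : ℕ) (h : i ≤ n + 1) : Equiv.Perm (Fin (n + 1)) where
  toFun b := ⟨if (b : ℕ) < i - 1 then b else if (b : ℕ) = i - 1 then n else (b : ℕ) - 1,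
    by have := b.isLt; split_ifs <;> omega⟩
  invFun a := ⟨if (a : ℕ) < i - 1 then a else if (a : ℕ) = n then i - 1 else (a : ℕ) + 1,
    by have := a.isLt; split_ifs <;> omega⟩
  left_inv b := by
    have := b.isLt
    apply Fin.ext
    simp only []
    split_ifs <;> omega
  right_inv a := by
    have := a.isLt
    apply Fin.ext
    simp only []
    split_ifs <;> omega

/-- the cycle (i+1, ..., j) 1-indexed; 0-indexed: b ↦ b+1 for i-1 < b < j-1, j-1 ↦ i. -/
def ps (n i j : ℕ) (h1 : 1 ≤ i) (h2 : i < j) (h3 : j ≤ n + 1) : Equiv.Perm (Fin (n + 1)) where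
  toFun b := ⟨if (b : ℕ) ≤ i - 1 ∨ j ≤ (b : ℕ) then b else if (b : ℕ) + 1 < j then (b : ℕ) + 1 else i,
    by have := b.isLt; split_ifs <;> omega⟩
  invFun a := ⟨if (a : ℕ) ≤ i - 1 ∨ j ≤ (a : ℕ) then a else if (a : ℕ) = i then j - 1 else (a : ℕ) - 1,
    by have := a.isLt; split_ifs <;> omega⟩
  left_inv b := by
    have := b.isLt
    apply Fin.ext
    simp only []
    split_ifs <;> omega
  right_inv a := by
    have := a.isLt
    apply Fin.ext
    simp only []
    split_ifs <;> omega

/-- transposition of i-1 and j-1 (0-indexed). -/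
def pt (n i j : ℕ) (h1 : 1 ≤ i) (h2 : i < j) (h3 : j ≤ n + 1) : Equiv.Perm (Fin (n + 1)) where
  toFun b := ⟨if (b : ℕ) = i - 1 then j - 1 else if (b : ℕ) = j - 1 then i - 1 else b,
    by have := b.isLt; split_ifs <;> omega⟩
  invFun b := ⟨if (b : ℕ) = i - 1 then j - 1 else if (b : ℕ) = j - 1 then i - 1 else b,
    by have := b.isLt; split_ifs <;> omega⟩
  left_inv b := by
    have := b.isLt
    apply Fin.ext
    simp only []
    split_ifs <;> omega
  right_inv b := by
    have := b.isLt
    apply Fin.ext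
    simp only []
    split_ifs <;> omega

set_option maxHeartbeats 1000000 in
lemma keyEntry (n i j : ℕ) (h1 : 1 ≤ i) (h2 : i < j) (h3 : j ≤ n + 1)
    (uα : Matrix (Fin (n + 1)) (Fin (n + 1)) ℂ)
    (huα : uα = 1 + Matrix.single (⟨i, Nat.lt_of_lt_of_le h2 h3⟩ : Fin (n + 1)) (⟨i - 1, Nat.lt_of_le_of_lt (Nat.sub_le i 1) (Nat.lt_of_lt_of_le h2 h3)⟩ : Fin (n + 1)) (1 : ℂ)
        - Matrix.single (⟨i - 1, Nat.lt_of_le_of_lt (Nat.sub_le i 1) (Nat.lt_of_lt_of_le h2 h3)⟩ : Fin (n + 1)) (⟨i, Nat.lt_of_lt_of_le h2 h3⟩ : Fin (n + 1)) (1 : ℂ))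
    (a b : Fin (n + 1)) :
    (if a = Fin.last n then (-1:ℂ) else 1) * uα ((pw n i (by omega)).symm a) ((ps n i j h1 h2 h3) b)
      = uα ((pw n i (by omega)).symm a) ((ps n i j h1 h2 h3) ((pt n i j h1 h2 h3) b)) := by
  have ha := a.isLt; have hb := b.isLt
  simp only [huα, Matrix.add_apply, Matrix.sub_apply, Matrix.one_apply,
    Matrix.single, Matrix.of_apply, Fin.ext_iff, Fin.val_mk, Fin.val_last]
  have hpw : (((pw n i (by omega : i ≤ n + 1)).symm a : Fin (n + 1)) : ℕ)
      = if (a : ℕ) < i - 1 then (a : ℕ) else if (a : ℕ) = n then i - 1 else (a : ℕ) + 1 := rfl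
  have hps : ∀ x : Fin (n + 1), ((ps n i j h1 h2 h3 x : Fin (n + 1)) : ℕ)
      = if (x : ℕ) ≤ i - 1 ∨ j ≤ (x : ℕ) then (x : ℕ) else if (x : ℕ) + 1 < j then (x : ℕ) + 1 else i :=
    fun _ => rfl
  have hpt : ((pt n i j h1 h2 h3 b : Fin (n + 1)) : ℕ)
      = if (b : ℕ) = i - 1 then j - 1 else if (b : ℕ) = j - 1 then i - 1 else (b : ℕ) := rfl
  rw [hpw, hps, hps, hpt]
  obtain hcb | hcb | hcb : (b : ℕ) = i - 1 ∨ (b : ℕ) = j - 1 ∨ ((b : ℕ) ≠ i - 1 ∧ (b : ℕ) ≠ j - 1) := by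
    omega
  · -- b = i-1 : q = i-1, q' = i
    rw [if_pos (show (b : ℕ) ≤ i - 1 ∨ j ≤ (b : ℕ) by omega),
      if_pos hcb, if_neg (show ¬(j - 1 ≤ i - 1 ∨ j ≤ j - 1) by omega),
      if_neg (show ¬(j - 1 + 1 < j) by omega), hcb]
    split_ifs <;> first | ring1 | omega
  · -- b = j-1 : q = i, q' = i-1
    rw [if_neg (show ¬((b : ℕ) ≤ i - 1 ∨ j ≤ (b : ℕ)) by omega),
      if_neg (show ¬((b : ℕ) + 1 < j) by omega),
      if_neg (show ¬(b : ℕ) = i - 1 by omega), if_pos hcb,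
      if_pos (show i - 1 ≤ i - 1 ∨ j ≤ i - 1 by omega)]
    split_ifs <;> first | ring1 | omega
  · -- b fixed by the transposition
    rw [if_neg hcb.1, if_neg hcb.2]
    split_ifs <;> first | ring1 | omega


set_option maxHeartbeats 1000000 in
/-- Let `v = w u_α σ ∈ GL(n+1,ℂ)` where (in `1`-indexed notation) `w` is the
permutation matrix of the cycle `(n+1, n, …, i)`, `σ` is the permutation matrix
of the cycle `(i+1, i+2, …, j)` and `u_α` is the Cayley transform matrix acting
by `e_i ↦ e_i + e_{i+1}`, `e_{i+1} ↦ -e_i + e_{i+1}`, `e_k ↦ e_k` otherwise,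
for `1 ≤ i < j ≤ n+1`.  Let `θ` be conjugation by `c = diag(1,…,1,-1)`.  Then
`v⁻¹ θ(v) = τ_{ij} t` where `τ_{ij}` is the permutation matrix of the
transposition `(i j)` and `t` is a diagonal matrix with `t² = I`. -/
theorem stmt11 (n i j : ℕ) (h1 : 1 ≤ i) (h2 : i < j) (h3 : j ≤ n + 1)
    (w uα σ v c τ : Matrix (Fin (n + 1)) (Fin (n + 1)) ℂ)
    (hw : w = Matrix.of fun a b : Fin (n + 1) =>
      if ((b : ℕ) < i - 1 ∧ a = b) ∨ ((b : ℕ) = i - 1 ∧ (a : ℕ) = n) ∨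
         (i - 1 < (b : ℕ) ∧ (a : ℕ) + 1 = (b : ℕ)) then (1 : ℂ) else 0)
    (hσ : σ = Matrix.of fun a b : Fin (n + 1) =>
      if (((b : ℕ) ≤ i - 1 ∨ j ≤ (b : ℕ)) ∧ a = b) ∨
         (i - 1 < (b : ℕ) ∧ (b : ℕ) + 1 < j ∧ (a : ℕ) = (b : ℕ) + 1) ∨
         ((b : ℕ) = j - 1 ∧ (a : ℕ) = i) then (1 : ℂ) else 0)
    (huα : uα = 1 + Matrix.single (⟨i, by omega⟩ : Fin (n + 1)) (⟨i - 1, by omega⟩ : Fin (n + 1)) (1 : ℂ)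
        - Matrix.single (⟨i - 1, by omega⟩ : Fin (n + 1)) (⟨i, by omega⟩ : Fin (n + 1)) (1 : ℂ))
    (hv : v = w * uα * σ)
    (hc : c = Matrix.diagonal (fun a : Fin (n + 1) => if a = Fin.last n then (-1 : ℂ) else 1))
    (hτ : τ = Matrix.of fun a b : Fin (n + 1) =>
      if (a = ⟨i - 1, by omega⟩ ∧ b = ⟨j - 1, by omega⟩) ∨
         (a = ⟨j - 1, by omega⟩ ∧ b = ⟨i - 1, by omega⟩) ∨
         (a = b ∧ a ≠ ⟨i - 1, by omega⟩ ∧ a ≠ ⟨j - 1, by omega⟩) then (1 : ℂ) else 0) :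
    ∃ t : Fin (n + 1) → ℂ, (∀ a, t a ^ 2 = 1) ∧
      v⁻¹ * (c * v * c⁻¹) = τ * Matrix.diagonal t := by
  -- identify w, σ, τ as permutation matrices
  have hwP : w = permMat (pw n i (by omega)) := by
    subst hw; clear hσ huα hv hc hτ; ext a b
    have ha := a.isLt; have hb := b.isLt
    simp only [permMat, pw, of_apply, Equiv.coe_fn_mk, Fin.ext_iff, Fin.val_mk]
    split_ifs <;> simp_all <;> omega
  have hσP : σ = permMat (ps n i j h1 h2 h3) := by
    subst hσ; clear hwP huα hv hc hτ; ext a b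
    have ha := a.isLt; have hb := b.isLt
    simp only [permMat, ps, of_apply, Equiv.coe_fn_mk, Fin.ext_iff, Fin.val_mk]
    split_ifs <;> simp_all <;> omega
  have hτP : τ = permMat (pt n i j h1 h2 h3) := by
    subst hτ; clear hwP hσP huα hv hc; ext a b
    have ha := a.isLt; have hb := b.isLt
    simp only [permMat, pt, of_apply, Equiv.coe_fn_mk, Fin.ext_iff, Fin.val_mk, ne_eq]
    split_ifs <;> simp_all
  -- entrywise formula for v
  have hvf : v = Matrix.of fun a b =>
      uα ((pw n i (by omega)).symm a) ((ps n i j h1 h2 h3) b) := by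
    rw [hv, hwP, hσP, permMat_mul, mul_permMat]
    rfl
  -- the key identity : c * v = v * τ
  have key : c * v = v * τ := by
    rw [hτP, mul_permMat, hc]
    ext a b
    rw [Matrix.diagonal_mul, Matrix.of_apply, hvf]
    exact keyEntry n i j h1 h2 h3 uα huα a b
  -- uα is invertible
  have hne : (⟨i, by omega⟩ : Fin (n + 1)) ≠ ⟨i - 1, by omega⟩ := by
    simp only [ne_eq, Fin.ext_iff, Fin.val_mk]; omega
  have hne' : (⟨i - 1, by omega⟩ : Fin (n + 1)) ≠ ⟨i, by omega⟩ := hne.symm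
  have huinv : uα * (1 - (2⁻¹ : ℂ) • (Matrix.single (⟨i, by omega⟩ : Fin (n + 1)) (⟨i - 1, by omega⟩ : Fin (n + 1)) (1:ℂ)
        - Matrix.single (⟨i - 1, by omega⟩ : Fin (n + 1)) (⟨i, by omega⟩ : Fin (n + 1)) (1:ℂ))
      - (2⁻¹ : ℂ) • (Matrix.single (⟨i, by omega⟩ : Fin (n + 1)) (⟨i, by omega⟩ : Fin (n + 1)) (1:ℂ)
        + Matrix.single (⟨i - 1, by omega⟩ : Fin (n + 1)) (⟨i - 1, by omega⟩ : Fin (n + 1)) (1:ℂ))) = 1 := by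
    rw [huα]
    simp only [Matrix.mul_sub, Matrix.sub_mul, Matrix.mul_add, Matrix.add_mul, Matrix.mul_smul,
      Matrix.mul_one, Matrix.one_mul,
      Matrix.single_mul_single_same, Matrix.single_mul_single_of_ne _ _ _ _ hne,
      Matrix.single_mul_single_of_ne _ _ _ _ hne', mul_one]
    module
  haveI : Invertible uα := invertibleOfRightInverse _ _ huinv
  haveI := permMatInvertible (pw n i (show i ≤ n + 1 by omega))
  haveI := permMatInvertible (ps n i j h1 h2 h3)
  haveI : Invertible v := by
    rw [hv, hwP, hσP]
    exact Invertible.mul (Invertible.mul ‹_› ‹_›) ‹_›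
  -- c² = 1 so c⁻¹ = c
  have hcc : c * c = 1 := by
    rw [hc, Matrix.diagonal_mul_diagonal]
    ext a b
    by_cases h : a = b <;> simp [Matrix.diagonal_apply, h, Matrix.one_apply] <;> split_ifs <;> ring
  have hcinv : c⁻¹ = c := Matrix.inv_eq_right_inv hcc
  -- conclude
  refine ⟨fun a => if a = Fin.last n then (-1 : ℂ) else 1, ?_, ?_⟩
  · intro a
    show (if a = Fin.last n then (-1:ℂ) else 1) ^ 2 = 1
    split_ifs <;> ring
  · have step : c * v * c⁻¹ = v * (τ * c) := by
      rw [hcinv, key, Matrix.mul_assoc]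
    rw [step, ← Matrix.mul_assoc, Matrix.nonsing_inv_mul v (Matrix.isUnit_det_of_invertible v),
      Matrix.one_mul, hc]
end

section
/- Let x ∈ gl(n+1,ℂ) be a regular nilpotent element contained in the upper triangular Borel b₊. Then x_n ∈ gl(n,ℂ) is regular nilpotent and z_{gl(n)}(x_n) ∩ z_{gl(n+1)}(x) = 0. -/
open Matrix

open Finset


section SU
variable {m : ℕ}

lemma su_pow_entry (x : Matrix (Fin m) (Fin m) ℂ)
    (hu : ∀ i j : Fin m, (j : ℕ) ≤ (i : ℕ) → x i j = 0) :
    ∀ (k : ℕ) (i j : Fin m), (j : ℕ) < (i : ℕ) + k → (x ^ k) i j = 0 := by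
  intro k
  induction k with
  | zero =>
    intro i j h
    simp only [Nat.add_zero] at h
    rw [pow_zero]
    exact Matrix.one_apply_ne (by intro e; subst e; omega)
  | succ k ih =>
    intro i j h
    rw [pow_succ', Matrix.mul_apply]
    apply Finset.sum_eq_zero
    intro l _
    rcases le_or_gt (l : ℕ) (i : ℕ) with hl | hl
    · rw [hu i l hl, zero_mul]
    · rw [ih l j (by omega), mul_zero]

lemma su_pow_eq_zero (x : Matrix (Fin m) (Fin m) ℂ)
    (hu : ∀ i j : Fin m, (j : ℕ) ≤ (i : ℕ) → x i j = 0) : x ^ m = 0 := by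
  ext i j
  rw [su_pow_entry x hu m i j (by omega)]
  rfl

lemma su_pow_superdiag (x : Matrix (Fin m) (Fin m) ℂ)
    (hu : ∀ i j : Fin m, (j : ℕ) ≤ (i : ℕ) → x i j = 0) :
    ∀ (k i : ℕ) (h : i + k < m),
      (x ^ k) ⟨i, by omega⟩ ⟨i + k, h⟩ =
        ∏ s : Fin k, x ⟨i + s, by omega⟩ ⟨i + s + 1, by omega⟩ := by
  intro k
  induction k with
  | zero =>
    intro i h
    simp [pow_zero, Matrix.one_apply]
  | succ k ih =>
    intro i h
    rw [pow_succ', Matrix.mul_apply]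
    rw [Finset.sum_eq_single (⟨i + 1, by omega⟩ : Fin m)]
    · have e1 : (⟨i + (k+1), h⟩ : Fin m) = ⟨i + 1 + k, by omega⟩ := by
        apply Fin.ext; simp; omega
      rw [e1, ih (i + 1) (by omega), Fin.prod_univ_succ]
      congr 1
      apply Finset.prod_congr rfl
      intro s _
      congr 1 <;> (simp only [Fin.mk.injEq, Fin.val_succ]; omega)
    · intro l _ hl
      rcases le_or_gt (l : ℕ) i with h2 | h2
      · rw [hu ⟨i, by omega⟩ l h2, zero_mul]
      · have : i + 1 + 1 ≤ (l : ℕ) := by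
          rcases Nat.lt_or_ge (l : ℕ) (i + 2) with h3 | h3
          · exfalso; apply hl; apply Fin.ext; simp; omega
          · omega
        rw [su_pow_entry x hu k l ⟨i + (k+1), h⟩ (by simp; omega), mul_zero]
    · intro hmem
      exact absurd (Finset.mem_univ _) hmem

end SU


section Reg
variable {m : ℕ}

/-- superdiagonal entries of powers are nonzero -/
lemma reg_pow_ne_zero (x : Matrix (Fin m) (Fin m) ℂ)
    (hu : ∀ i j : Fin m, (j : ℕ) ≤ (i : ℕ) → x i j = 0)
    (hs : ∀ (k : ℕ) (h : k + 1 < m), x ⟨k, by omega⟩ ⟨k + 1, h⟩ ≠ 0) :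
    ∀ (k i : ℕ) (h : i + k < m), (x ^ k) ⟨i, by omega⟩ ⟨i + k, h⟩ ≠ 0 := by
  intro k i h
  rw [su_pow_superdiag x hu k i h]
  apply Finset.prod_ne_zero_iff.2
  intro s _
  exact hs (i + (s : ℕ)) (by have := s.isLt; omega)

/-- the matrix whose j-th column is `x^(m-1-j)` applied to the last basis vector -/
noncomputable def Bmat (hm : 0 < m) (x : Matrix (Fin m) (Fin m) ℂ) :
    Matrix (Fin m) (Fin m) ℂ :=
  Matrix.of fun i j => (x ^ (m - 1 - (j : ℕ))) i ⟨m - 1, by omega⟩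

lemma Bmat_ut (hm : 0 < m) (x : Matrix (Fin m) (Fin m) ℂ)
    (hu : ∀ i j : Fin m, (j : ℕ) ≤ (i : ℕ) → x i j = 0) :
    (Bmat hm x).BlockTriangular id := by
  intro i j hij
  simp only [Bmat, Matrix.of_apply]
  apply su_pow_entry x hu
  have hi := i.isLt
  have hj := j.isLt
  simp only [id] at hij
  omega

lemma Bmat_isUnit (hm : 0 < m) (x : Matrix (Fin m) (Fin m) ℂ)
    (hu : ∀ i j : Fin m, (j : ℕ) ≤ (i : ℕ) → x i j = 0)
    (hs : ∀ (k : ℕ) (h : k + 1 < m), x ⟨k, by omega⟩ ⟨k + 1, h⟩ ≠ 0) :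
    IsUnit (Bmat hm x).det := by
  rw [Matrix.det_of_upperTriangular (Bmat_ut hm x hu)]
  rw [isUnit_iff_ne_zero]
  apply Finset.prod_ne_zero_iff.2
  intro j _
  have hj := j.isLt
  have e : (⟨m - 1, by omega⟩ : Fin m) = ⟨(j : ℕ) + (m - 1 - (j : ℕ)), by omega⟩ := by
    apply Fin.ext; simp; omega
  simp only [Bmat, Matrix.of_apply]
  rw [e]
  exact reg_pow_ne_zero x hu hs (m - 1 - (j : ℕ)) (j : ℕ) (by omega)

/-- cancel B on the right -/
lemma cancel_Bmat (hm : 0 < m) (x : Matrix (Fin m) (Fin m) ℂ)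
    (hu : ∀ i j : Fin m, (j : ℕ) ≤ (i : ℕ) → x i j = 0)
    (hs : ∀ (k : ℕ) (h : k + 1 < m), x ⟨k, by omega⟩ ⟨k + 1, h⟩ ≠ 0)
    (y : Matrix (Fin m) (Fin m) ℂ) (h : y * Bmat hm x = 0) : y = 0 := by
  have h1 := Matrix.mul_nonsing_inv (Bmat hm x) (Bmat_isUnit hm x hu hs)
  calc y = y * (Bmat hm x * (Bmat hm x)⁻¹) := by rw [h1, mul_one]
    _ = (y * Bmat hm x) * (Bmat hm x)⁻¹ := by rw [mul_assoc]
    _ = 0 := by rw [h, Matrix.zero_mul]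

lemma mul_Bmat_entry (hm : 0 < m) (x y : Matrix (Fin m) (Fin m) ℂ) (i j : Fin m) :
    (y * Bmat hm x) i j = (y * x ^ (m - 1 - (j : ℕ))) i ⟨m - 1, by omega⟩ := by
  simp only [Matrix.mul_apply, Bmat, Matrix.of_apply]

/-- any matrix commuting with x is a linear combination of powers of x -/
lemma commutant_eq_poly (hm : 0 < m) (x : Matrix (Fin m) (Fin m) ℂ)
    (hu : ∀ i j : Fin m, (j : ℕ) ≤ (i : ℕ) → x i j = 0)
    (hs : ∀ (k : ℕ) (h : k + 1 < m), x ⟨k, by omega⟩ ⟨k + 1, h⟩ ≠ 0)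
    (y : Matrix (Fin m) (Fin m) ℂ) (hc : x * y = y * x) :
    ∃ a : Fin m → ℂ, y = ∑ j : Fin m, a j • x ^ (m - 1 - (j : ℕ)) := by
  have hc' : Commute x y := hc
  have hcp : ∀ k : ℕ, x ^ k * y = y * x ^ k := fun k => (hc'.pow_left k).eq
  set B := Bmat hm x with hB
  have hBu := Bmat_isUnit hm x hu hs
  set a : Fin m → ℂ := B⁻¹ *ᵥ (fun i => y i ⟨m - 1, by omega⟩) with ha
  refine ⟨a, ?_⟩
  set p : Matrix (Fin m) (Fin m) ℂ := ∑ j : Fin m, a j • x ^ (m - 1 - (j : ℕ)) with hp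
  have hpc : ∀ k : ℕ, x ^ k * p = p * x ^ k := by
    intro k
    rw [hp, Finset.mul_sum, Finset.sum_mul]
    apply Finset.sum_congr rfl
    intro j _
    rw [Matrix.mul_smul, Matrix.smul_mul, ← pow_add, ← pow_add, Nat.add_comm]
  have hlast : ∀ i : Fin m, p i ⟨m - 1, by omega⟩ = y i ⟨m - 1, by omega⟩ := by
    intro i
    have h2 : p i ⟨m - 1, by omega⟩ = (B *ᵥ a) i := by
      rw [hp]
      simp only [Matrix.sum_apply, Matrix.smul_apply, Matrix.mulVec, dotProduct,
        hB, Bmat, Matrix.of_apply, smul_eq_mul]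
      apply Finset.sum_congr rfl
      intro j _
      ring
    rw [h2, ha, Matrix.mulVec_mulVec, Matrix.mul_nonsing_inv _ hBu, Matrix.one_mulVec]
  have key : (y - p) * B = 0 := by
    ext i j
    rw [Matrix.sub_mul, Matrix.sub_apply, mul_Bmat_entry hm x, mul_Bmat_entry hm x]
    rw [← hcp, ← hpc, Matrix.zero_apply, Matrix.mul_apply, Matrix.mul_apply]
    rw [sub_eq_zero]
    apply Finset.sum_congr rfl
    intro l _
    rw [hlast l]
  have h3 := cancel_Bmat hm x hu hs _ key
  rwa [sub_eq_zero] at h3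

lemma powers_linIndep (hm : 0 < m) (x : Matrix (Fin m) (Fin m) ℂ)
    (hu : ∀ i j : Fin m, (j : ℕ) ≤ (i : ℕ) → x i j = 0)
    (hs : ∀ (k : ℕ) (h : k + 1 < m), x ⟨k, by omega⟩ ⟨k + 1, h⟩ ≠ 0) :
    LinearIndependent ℂ (fun j : Fin m => x ^ (m - 1 - (j : ℕ))) := by
  rw [Fintype.linearIndependent_iff]
  intro a hsum j
  have hBv : Bmat hm x *ᵥ a = 0 := by
    funext i
    have h4 := congrFun (congrFun hsum i) ⟨m - 1, by omega⟩
    simpa only [Matrix.sum_apply, Matrix.smul_apply, Matrix.zero_apply, smul_eq_mul,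
      Matrix.mulVec, dotProduct, Bmat, Matrix.of_apply, Pi.zero_apply,
      mul_comm] using h4
  have h5 : a = 0 := by
    have h2 := congrArg (fun v => (Bmat hm x)⁻¹ *ᵥ v) hBv
    simpa [Matrix.mulVec_mulVec, Matrix.nonsing_inv_mul _ (Bmat_isUnit hm x hu hs),
      Matrix.mulVec_zero, Matrix.one_mulVec] using h2
  rw [h5]; rfl

lemma centralizer_eq_span (hm : 0 < m) (x : Matrix (Fin m) (Fin m) ℂ)
    (hu : ∀ i j : Fin m, (j : ℕ) ≤ (i : ℕ) → x i j = 0)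
    (hs : ∀ (k : ℕ) (h : k + 1 < m), x ⟨k, by omega⟩ ⟨k + 1, h⟩ ≠ 0) :
    matCentralizer x = Submodule.span ℂ (Set.range fun j : Fin m => x ^ (m - 1 - (j : ℕ))) := by
  apply le_antisymm
  · intro y hy
    obtain ⟨a, rfl⟩ := commutant_eq_poly hm x hu hs y hy
    apply Submodule.sum_mem
    intro j _
    exact Submodule.smul_mem _ _ (Submodule.subset_span ⟨j, rfl⟩)
  · rw [Submodule.span_le]
    rintro _ ⟨j, rfl⟩
    show x * _ = _ * x
    rw [← pow_succ', ← pow_succ]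

lemma centralizer_finrank_eq (hm : 0 < m) (x : Matrix (Fin m) (Fin m) ℂ)
    (hu : ∀ i j : Fin m, (j : ℕ) ≤ (i : ℕ) → x i j = 0)
    (hs : ∀ (k : ℕ) (h : k + 1 < m), x ⟨k, by omega⟩ ⟨k + 1, h⟩ ≠ 0) :
    Module.finrank ℂ (matCentralizer x) = m := by
  rw [centralizer_eq_span hm x hu hs, finrank_span_eq_card (powers_linIndep hm x hu hs),
    Fintype.card_fin]

end Reg

section Helpers
variable {m : ℕ}

lemma vmv_mulVec (a r u : Fin m → ℂ) :
    (Matrix.vecMulVec a r) *ᵥ u = (∑ j, r j * u j) • a := by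
  funext i
  simp only [Matrix.mulVec, dotProduct, Matrix.vecMulVec_apply, Pi.smul_apply,
    smul_eq_mul, Finset.sum_mul]
  apply Finset.sum_congr rfl
  intro j _
  ring

lemma sum_mulVec' {ι : Type*} (s : Finset ι) (f : ι → Matrix (Fin m) (Fin m) ℂ)
    (u : Fin m → ℂ) : (∑ i ∈ s, f i) *ᵥ u = ∑ i ∈ s, f i *ᵥ u := by
  funext a
  rw [Finset.sum_apply]
  simp only [Matrix.mulVec, dotProduct, Matrix.sum_apply, Finset.sum_mul]
  rw [Finset.sum_comm]

lemma mulVec_sum' {ι : Type*} (s : Finset ι) (A : Matrix (Fin m) (Fin m) ℂ)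
    (f : ι → (Fin m → ℂ)) : A *ᵥ (∑ i ∈ s, f i) = ∑ i ∈ s, A *ᵥ f i := by
  rw [← Matrix.mulVecLin_apply, map_sum]
  simp [Matrix.mulVecLin_apply]

lemma lin_decomp (G : (Fin m → ℂ) →ₗ[ℂ] ℂ) (u : Fin m → ℂ) :
    G u = ∑ j, u j * G (Pi.single j 1) := by
  have hu : u = ∑ j, u j • (Pi.single j 1 : Fin m → ℂ) := by
    funext a
    rw [Finset.sum_apply]
    simp [Pi.single_apply]
  conv_lhs => rw [hu]
  rw [map_sum]
  apply Finset.sum_congr rfl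
  intro j _
  rw [_root_.map_smul, smul_eq_mul]

lemma vecMulVec_sum_left {ι : Type*} [Fintype ι] (cs : ι → ℂ) (us : ι → (Fin m → ℂ))
    (r : Fin m → ℂ) :
    Matrix.vecMulVec (∑ s, cs s • us s) r = ∑ s, cs s • Matrix.vecMulVec (us s) r := by
  ext i j
  simp only [Matrix.vecMulVec_apply, Matrix.sum_apply, Matrix.smul_apply, Finset.sum_apply,
    Pi.smul_apply, smul_eq_mul, Finset.sum_mul]
  apply Finset.sum_congr rfl
  intro s _
  ring

lemma vecMulVec_sum_right {ι : Type*} [Fintype ι] (cs : ι → ℂ) (rs : ι → (Fin m → ℂ))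
    (a : Fin m → ℂ) :
    Matrix.vecMulVec a (∑ s, cs s • rs s) = ∑ s, cs s • Matrix.vecMulVec a (rs s) := by
  ext i j
  simp only [Matrix.vecMulVec_apply, Matrix.sum_apply, Matrix.smul_apply, Finset.sum_apply,
    Pi.smul_apply, smul_eq_mul, Finset.mul_sum]
  apply Finset.sum_congr rfl
  intro s _
  ring

lemma single_dot (i0 : Fin m) (q : Fin m → ℂ) :
    (∑ j, (Pi.single i0 1 : Fin m → ℂ) j * q j) = q i0 := by
  rw [Finset.sum_eq_single i0]
  · simp
  · intro j _ hj
    rw [Pi.single_eq_of_ne hj, zero_mul]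
  · intro h
    exact absurd (Finset.mem_univ _) h

end Helpers

section Key

set_option maxHeartbeats 1000000 in
lemma key_lower_bound {m : ℕ} (hm : 2 ≤ m) (x : Matrix (Fin m) (Fin m) ℂ)
    (hx : x ^ (m - 1) = 0) :
    m + 1 ≤ Module.finrank ℂ (matCentralizer x) := by
  classical
  have hex : ∃ k, x ^ k = 0 := ⟨m - 1, hx⟩
  set d := Nat.find hex with hdDef
  have hxd : x ^ d = 0 := Nat.find_spec hex
  have hdm : d ≤ m - 1 := Nat.find_min' hex hx
  have hd1 : 1 ≤ d := by
    by_contra h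
    have h0 : d = 0 := by omega
    have h2 := hxd
    rw [h0, pow_zero] at h2
    have h1 : (1 : Matrix (Fin m) (Fin m) ℂ) ⟨0, by omega⟩ ⟨0, by omega⟩ = 1 :=
      Matrix.one_apply_eq _
    rw [h2] at h1
    simpa using h1
  have hxd1 : x ^ (d - 1) ≠ 0 := Nat.find_min hex (by omega)
  have hpow0 : ∀ e, d ≤ e → x ^ e = 0 := by
    intro e he
    have h5 : x ^ e = x ^ d * x ^ (e - d) := by rw [← pow_add]; congr 1; omega
    rw [h5, hxd, Matrix.zero_mul]
  obtain ⟨i0, j0, hij⟩ : ∃ i0 j0, (x ^ (d - 1)) i0 j0 ≠ 0 := by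
    by_contra h
    push_neg at h
    apply hxd1
    ext i j
    rw [h i j]
    rfl
  -- the anti-triangular system lemma
  have Tlem : ∀ β : ℕ → ℂ,
      (∀ k, k < d → ∑ i ∈ Finset.range d, β i * (x ^ (k + i)) i0 j0 = 0) →
      ∀ q, q < d → β q = 0 := by
    intro β hβ q
    induction q using Nat.strong_induction_on with
    | _ q ih =>
      intro hq
      have hk := hβ (d - 1 - q) (by omega)
      rw [Finset.sum_eq_single q] at hk
      · have he : d - 1 - q + q = d - 1 := by omega
        rw [he] at hk
        rcases mul_eq_zero.1 hk with h | h
        · exact h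
        · exact absurd h hij
      · intro i hi hne
        rcases Nat.lt_or_ge i q with h | h
        · rw [ih i h (by omega), zero_mul]
        · have h6 : d ≤ d - 1 - q + i := by omega
          rw [hpow0 _ h6, Matrix.zero_apply, mul_zero]
      · intro h
        exact absurd (Finset.mem_range.2 hq) h
  -- the vector v and its powers
  set v : Fin m → ℂ := Pi.single j0 1 with hvDef
  have hxv : ∀ (e : ℕ) (i : Fin m), ((x ^ e) *ᵥ v) i = (x ^ e) i j0 := by
    intro e i
    rw [hvDef, Matrix.mulVec_single]
    simp
  -- the subspace W
  set L : (Fin m → ℂ) →ₗ[ℂ] (Fin d → ℂ) :=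
    LinearMap.pi (fun i : Fin d => (LinearMap.proj i0) ∘ₗ (Matrix.mulVecLin (x ^ (i : ℕ))))
    with hLDef
  set W : Submodule ℂ (Fin m → ℂ) := LinearMap.ker L with hWDef
  have hWmem : ∀ u : Fin m → ℂ, u ∈ W ↔ ∀ i : Fin d, ((x ^ (i : ℕ)) *ᵥ u) i0 = 0 := by
    intro u
    rw [hWDef, LinearMap.mem_ker, funext_iff]
    apply forall_congr'
    intro i
    simp [hLDef, LinearMap.pi_apply, Matrix.mulVecLin_apply]
  have hWall : ∀ u ∈ W, ∀ e : ℕ, ((x ^ e) *ᵥ u) i0 = 0 := by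
    intro u hu e
    rcases Nat.lt_or_ge e d with h | h
    · exact (hWmem u).1 hu ⟨e, h⟩
    · rw [hpow0 e h, Matrix.zero_mulVec]
      rfl
  have hWinv : ∀ u ∈ W, ∀ e : ℕ, (x ^ e) *ᵥ u ∈ W := by
    intro u hu e
    rw [hWmem]
    intro i
    rw [Matrix.mulVec_mulVec, ← pow_add]
    exact hWall u hu _
  -- dimension of W
  set t := Module.finrank ℂ W with htDef
  have htc : m - d ≤ t := by
    have h1 := LinearMap.finrank_range_add_finrank_ker L
    have h2 : Module.finrank ℂ (LinearMap.range L) ≤ d := by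
      calc Module.finrank ℂ (LinearMap.range L) ≤ Module.finrank ℂ (Fin d → ℂ) :=
            (LinearMap.range L).finrank_le
        _ = d := by simp
    have h3 : Module.finrank ℂ (Fin m → ℂ) = m := by simp
    have h4 : Module.finrank ℂ (LinearMap.ker L) = t := by rw [htDef, hWDef]
    rw [h3, h4] at h1
    omega
  -- basis of W and dual functionals
  let bW : Module.Basis (Fin t) ℂ W := Module.finBasis ℂ W
  set g : Fin t → ((Fin m → ℂ) →ₗ[ℂ] ℂ) := fun s => Subspace.dualLift W (bW.coord s) with hgDef
  have hgb : ∀ s r, g s (bW r : Fin m → ℂ) = if r = s then 1 else 0 := by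
    intro s r
    rw [hgDef]
    show Subspace.dualLift W (bW.coord s) ((bW r : Fin m → ℂ)) = _
    rw [Subspace.dualLift_of_subtype, Module.Basis.coord_apply, Module.Basis.repr_self_apply]
  -- the operator Phi
  set Phi : Matrix (Fin m) (Fin m) ℂ →ₗ[ℂ] Matrix (Fin m) (Fin m) ℂ :=
    ∑ i ∈ Finset.range d,
      (LinearMap.mulLeft ℂ (x ^ i)).comp (LinearMap.mulRight ℂ (x ^ (d - 1 - i))) with hPhiDef
  have hPhiApply : ∀ M, Phi M = ∑ i ∈ Finset.range d, x ^ i * M * x ^ (d - 1 - i) := by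
    intro M
    rw [hPhiDef, LinearMap.sum_apply]
    apply Finset.sum_congr rfl
    intro i _
    simp only [LinearMap.comp_apply, LinearMap.mulLeft_apply, LinearMap.mulRight_apply, mul_assoc]
  have phi_comm : ∀ M, x * Phi M = Phi M * x := by
    intro M
    have h1 : x * Phi M = ∑ i ∈ Finset.range d, x ^ (i + 1) * M * x ^ (d - (i + 1)) := by
      rw [hPhiApply, Finset.mul_sum]
      apply Finset.sum_congr rfl
      intro i hi
      have h7 : d - 1 - i = d - (i + 1) := by omega
      rw [← h7]
      simp only [pow_succ', mul_assoc]
    have h2 : Phi M * x = ∑ i ∈ Finset.range d, x ^ i * M * x ^ (d - i) := by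
      rw [hPhiApply, Finset.sum_mul]
      apply Finset.sum_congr rfl
      intro i hi
      have h7 : d - i = (d - 1 - i) + 1 := by
        have := Finset.mem_range.1 hi
        omega
      rw [h7, pow_succ]
      simp only [mul_assoc]
    have h3 := Finset.sum_range_succ (fun i => x ^ i * M * x ^ (d - i)) d
    have h4 := Finset.sum_range_succ' (fun i => x ^ i * M * x ^ (d - i)) d
    rw [h1, h2]
    calc ∑ i ∈ Finset.range d, x ^ (i + 1) * M * x ^ (d - (i + 1))
        = ∑ i ∈ Finset.range (d + 1), x ^ i * M * x ^ (d - i) := by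
          rw [h4, pow_zero, Nat.sub_zero, hxd]
          simp
      _ = ∑ i ∈ Finset.range d, x ^ i * M * x ^ (d - i) := by
          rw [h3, hxd]
          simp
  have phiRank : ∀ (a r u : Fin m → ℂ),
      (Phi (Matrix.vecMulVec a r)) *ᵥ u
        = ∑ i ∈ Finset.range d, (∑ j, r j * ((x ^ (d - 1 - i)) *ᵥ u) j) • ((x ^ i) *ᵥ a) := by
    intro a r u
    rw [hPhiApply, sum_mulVec']
    apply Finset.sum_congr rfl
    intro i _
    rw [← Matrix.mulVec_mulVec, ← Matrix.mulVec_mulVec, vmv_mulVec, Matrix.mulVec_smul]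
  -- the independent family
  set e0 : Fin m → ℂ := Pi.single i0 1 with he0Def
  let F : (Fin d ⊕ (Fin t ⊕ Fin t)) → Matrix (Fin m) (Fin m) ℂ :=
    Sum.elim (fun i : Fin d => x ^ (i : ℕ))
      (Sum.elim (fun s : Fin t => Phi (Matrix.vecMulVec (bW s : Fin m → ℂ) e0))
        (fun s : Fin t => Phi (Matrix.vecMulVec v (fun j => g s (Pi.single j 1)))))
  have hmemF : ∀ i, F i ∈ matCentralizer x := by
    rintro (i | s | s)
    · show x * x ^ (i : ℕ) = x ^ (i : ℕ) * x
      rw [← pow_succ', ← pow_succ]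
    · exact phi_comm _
    · exact phi_comm _
  have hindF : LinearIndependent ℂ F := by
    rw [Fintype.linearIndependent_iff]
    intro a ha
    set aP : Fin d → ℂ := fun i => a (Sum.inl i) with haPdef
    set aQ : Fin t → ℂ := fun s => a (Sum.inr (Sum.inl s)) with haQdef
    set aR : Fin t → ℂ := fun s => a (Sum.inr (Sum.inr s)) with haRdef
    set G : (Fin m → ℂ) →ₗ[ℂ] ℂ := ∑ s, aR s • g s with hGDef
    set w : Fin m → ℂ := ∑ s, aQ s • (bW s : Fin m → ℂ) with hwDef
    have hwW : w ∈ W := by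
      rw [hwDef]
      apply Submodule.sum_mem
      intro s _
      exact Submodule.smul_mem _ _ (bW s).2
    set P : Matrix (Fin m) (Fin m) ℂ := ∑ i : Fin d, aP i • x ^ (i : ℕ) with hPDef
    -- collapse the three parts of the sum
    have ha' : P + (Phi (Matrix.vecMulVec w e0)
        + Phi (Matrix.vecMulVec v (fun j => G (Pi.single j 1)))) = 0 := by
      rw [← ha, Fintype.sum_sum_type, Fintype.sum_sum_type]
      congr 1
      congr 1
      · rw [hwDef, vecMulVec_sum_left, map_sum]
        apply Finset.sum_congr rfl
        intro s _
        rw [_root_.map_smul]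
        rfl
      · have hrho : (fun j => G (Pi.single j 1))
            = ∑ s, aR s • (fun j => g s (Pi.single j 1)) := by
          funext j
          rw [hGDef, Finset.sum_apply, LinearMap.sum_apply]
          apply Finset.sum_congr rfl
          intro s _
          rw [LinearMap.smul_apply, Pi.smul_apply]
        rw [hrho, vecMulVec_sum_right, map_sum]
        apply Finset.sum_congr rfl
        intro s _
        rw [_root_.map_smul]
        rfl
    -- memberships of applied parts
    have hPu : ∀ u ∈ W, P *ᵥ u ∈ W := by
      intro u hu
      rw [hPDef, sum_mulVec']
      apply Submodule.sum_mem
      intro i _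
      rw [Matrix.smul_mulVec]
      exact Submodule.smul_mem _ _ (hWinv u hu i)
    have hQu : ∀ u : Fin m → ℂ, (Phi (Matrix.vecMulVec w e0)) *ᵥ u ∈ W := by
      intro u
      rw [phiRank]
      apply Submodule.sum_mem
      intro i _
      exact Submodule.smul_mem _ _ (hWinv w hwW i)
    have hRu : ∀ u : Fin m → ℂ, (Phi (Matrix.vecMulVec v (fun j => G (Pi.single j 1)))) *ᵥ u
        = ∑ i ∈ Finset.range d, (G ((x ^ (d - 1 - i)) *ᵥ u)) • ((x ^ i) *ᵥ v) := by
      intro u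
      rw [phiRank]
      apply Finset.sum_congr rfl
      intro i _
      congr 1
      rw [lin_decomp G ((x ^ (d - 1 - i)) *ᵥ u)]
      apply Finset.sum_congr rfl
      intro j _
      ring
    -- Step 1 : the functionals coefficients vanish
    have hGW : ∀ u ∈ W, G u = 0 := by
      intro w' hw'
      have h0 : P *ᵥ w' + ((Phi (Matrix.vecMulVec w e0)) *ᵥ w'
          + ∑ i ∈ Finset.range d, (G ((x ^ (d - 1 - i)) *ᵥ w')) • ((x ^ i) *ᵥ v)) = 0 := by
        rw [← hRu, ← Matrix.add_mulVec, ← Matrix.add_mulVec, ha', Matrix.zero_mulVec]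
      have hcoord : ∀ k, k < d → ∑ i ∈ Finset.range d,
          (G ((x ^ (d - 1 - i)) *ᵥ w')) * (x ^ (k + i)) i0 j0 = 0 := by
        intro k hk
        have h1 := congrArg (fun u => ((x ^ k) *ᵥ u) i0) h0
        beta_reduce at h1
        rw [Matrix.mulVec_zero, Matrix.mulVec_add, Matrix.mulVec_add, Pi.zero_apply,
          Pi.add_apply, Pi.add_apply, hWall _ (hPu w' hw') k, hWall _ (hQu w') k] at h1
        have h2 : ((x ^ k) *ᵥ (∑ i ∈ Finset.range d,
            (G ((x ^ (d - 1 - i)) *ᵥ w')) • ((x ^ i) *ᵥ v))) i0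
            = ∑ i ∈ Finset.range d, (G ((x ^ (d - 1 - i)) *ᵥ w')) * (x ^ (k + i)) i0 j0 := by
          rw [mulVec_sum', Finset.sum_apply]
          apply Finset.sum_congr rfl
          intro i _
          rw [Matrix.mulVec_smul, Pi.smul_apply, smul_eq_mul]
          congr 1
          rw [Matrix.mulVec_mulVec, ← pow_add]
          exact hxv (k + i) i0
        rw [h2] at h1
        rw [zero_add, zero_add] at h1
        exact h1
      have h3 := Tlem (fun i => G ((x ^ (d - 1 - i)) *ᵥ w')) hcoord (d - 1) (by omega)
      beta_reduce at h3
      rw [show d - 1 - (d - 1) = 0 from by omega, pow_zero, Matrix.one_mulVec] at h3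
      exact h3
    have haR0 : ∀ s, aR s = 0 := by
      intro s
      have h4 := hGW (bW s : Fin m → ℂ) (bW s).2
      rw [hGDef, LinearMap.sum_apply, Finset.sum_eq_single s] at h4
      · rw [LinearMap.smul_apply, hgb s s, if_pos rfl, smul_eq_mul, mul_one] at h4
        exact h4
      · intro r _ hr
        rw [LinearMap.smul_apply, hgb r s, if_neg (Ne.symm hr), smul_eq_mul, mul_zero]
      · intro h
        exact absurd (Finset.mem_univ s) h
    have hG0 : G = 0 := by
      rw [hGDef]
      apply Finset.sum_eq_zero
      intro s _
      rw [haR0 s, zero_smul]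
    have hrho0 : (fun j => G (Pi.single j 1)) = (0 : Fin m → ℂ) := by
      funext j
      rw [hG0]
      rfl
    have hvmv0 : Matrix.vecMulVec v (0 : Fin m → ℂ) = 0 := by
      ext i j
      simp [Matrix.vecMulVec_apply]
    rw [hrho0, hvmv0, map_zero, add_zero] at ha'
    -- Step 2 : the power coefficients vanish
    have haP0 : ∀ i, aP i = 0 := by
      have h0 : P *ᵥ v + (Phi (Matrix.vecMulVec w e0)) *ᵥ v = 0 := by
        rw [← Matrix.add_mulVec, ha', Matrix.zero_mulVec]
      have hcoord : ∀ k, k < d → ∑ i ∈ Finset.range d,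
          (fun i => if h : i < d then aP ⟨i, h⟩ else 0) i * (x ^ (k + i)) i0 j0 = 0 := by
        intro k hk
        have h1 := congrArg (fun u => ((x ^ k) *ᵥ u) i0) h0
        beta_reduce at h1
        rw [Matrix.mulVec_zero, Matrix.mulVec_add, Pi.zero_apply, Pi.add_apply,
          hWall _ (hQu v) k] at h1
        have h4 : ((x ^ k) *ᵥ (P *ᵥ v)) i0 = ∑ i : Fin d, aP i * (x ^ (k + (i : ℕ))) i0 j0 := by
          rw [hPDef, sum_mulVec', mulVec_sum', Finset.sum_apply]
          apply Finset.sum_congr rfl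
          intro i _
          rw [Matrix.smul_mulVec, Matrix.mulVec_smul, Pi.smul_apply, smul_eq_mul]
          congr 1
          rw [Matrix.mulVec_mulVec, ← pow_add]
          exact hxv _ i0
        have h3 : ∑ i ∈ Finset.range d,
            (fun i => if h : i < d then aP ⟨i, h⟩ else 0) i * (x ^ (k + i)) i0 j0
            = ∑ i : Fin d, aP i * (x ^ (k + (i : ℕ))) i0 j0 := by
          rw [← Fin.sum_univ_eq_sum_range]
          apply Finset.sum_congr rfl
          intro i _
          simp only [dif_pos i.isLt]
        rw [h4, add_zero] at h1
        rw [h3, h1]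
      intro i
      have h5 := Tlem _ hcoord (i : ℕ) i.isLt
      simpa using h5
    have hP0 : P = 0 := by
      rw [hPDef]
      apply Finset.sum_eq_zero
      intro i _
      rw [haP0 i, zero_smul]
    rw [hP0, zero_add] at ha'
    -- Step 3 : the basis coefficients vanish
    have hw0 : w = 0 := by
      have h0 : (Phi (Matrix.vecMulVec w e0)) *ᵥ v = 0 := by
        rw [ha', Matrix.zero_mulVec]
      rw [phiRank] at h0
      have h1 : ∀ i : ℕ, (∑ j, e0 j * ((x ^ (d - 1 - i)) *ᵥ v) j) = (x ^ (d - 1 - i)) i0 j0 := by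
        intro i
        rw [he0Def, single_dot]
        exact hxv _ i0
      set N : Matrix (Fin m) (Fin m) ℂ :=
        ∑ i ∈ Finset.range d, ((x ^ (d - 1 - i)) i0 j0) • x ^ i with hNDef
      have h2 : N *ᵥ w = 0 := by
        rw [hNDef, sum_mulVec', ← h0]
        apply Finset.sum_congr rfl
        intro i _
        rw [Matrix.smul_mulVec, h1 i]
      have hNunit : IsUnit N := by
        set Prest : Matrix (Fin m) (Fin m) ℂ :=
          ∑ i ∈ Finset.range (d - 1), ((x ^ (d - 1 - (i + 1))) i0 j0) • x ^ i with hPrest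
        have hcomm : Commute x Prest := by
          show x * Prest = Prest * x
          rw [hPrest, Finset.mul_sum, Finset.sum_mul]
          apply Finset.sum_congr rfl
          intro i _
          rw [Matrix.mul_smul, Matrix.smul_mul, ← pow_succ', ← pow_succ]
        have hsplit := Finset.sum_range_succ'
          (fun i => ((x ^ (d - 1 - i)) i0 j0) • x ^ i) (d - 1)
        rw [show d - 1 + 1 = d from by omega] at hsplit
        have hN : N = x * Prest + ((x ^ (d - 1)) i0 j0) • (1 : Matrix (Fin m) (Fin m) ℂ) := by
          rw [hNDef, hsplit, Nat.sub_zero, pow_zero]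
          congr 1
          rw [hPrest, Finset.mul_sum]
          apply Finset.sum_congr rfl
          intro i _
          rw [Matrix.mul_smul, ← pow_succ']
        have hnil : IsNilpotent (x * Prest) := by
          refine ⟨d, ?_⟩
          rw [hcomm.mul_pow, hxd, Matrix.zero_mul]
        have hu1 : IsUnit (((x ^ (d - 1)) i0 j0) • (1 : Matrix (Fin m) (Fin m) ℂ)) := by
          refine ⟨⟨((x ^ (d - 1)) i0 j0) • 1, (((x ^ (d - 1)) i0 j0)⁻¹) • 1, ?_, ?_⟩, rfl⟩
          · rw [smul_mul_assoc, one_mul, smul_smul, mul_inv_cancel₀ hij, one_smul]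
          · rw [smul_mul_assoc, one_mul, smul_smul, inv_mul_cancel₀ hij, one_smul]
        have hcomm2 : Commute (x * Prest)
            (((x ^ (d - 1)) i0 j0) • (1 : Matrix (Fin m) (Fin m) ℂ)) :=
          Commute.smul_right (Commute.one_right _) _
        rw [hN, add_comm]
        exact IsNilpotent.isUnit_add_left_of_commute hnil hu1 hcomm2
      obtain ⟨uu, huu⟩ := hNunit
      calc w = (1 : Matrix (Fin m) (Fin m) ℂ) *ᵥ w := (Matrix.one_mulVec w).symm
        _ = ((↑uu⁻¹ : Matrix (Fin m) (Fin m) ℂ) * N) *ᵥ w := by rw [← huu, Units.inv_mul]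
        _ = (↑uu⁻¹ : Matrix (Fin m) (Fin m) ℂ) *ᵥ (N *ᵥ w) := by rw [Matrix.mulVec_mulVec]
        _ = 0 := by rw [h2, Matrix.mulVec_zero]
    have haQ0 : ∀ s, aQ s = 0 := by
      have h5 : (∑ s, aQ s • bW s) = (0 : W) := by
        apply Submodule.injective_subtype W
        rw [map_sum, map_zero]
        have h6 : ∀ s : Fin t, W.subtype (aQ s • bW s) = aQ s • ((bW s : Fin m → ℂ)) := by
          intro s
          simp
        rw [Finset.sum_congr rfl (fun s _ => h6 s), ← hwDef, hw0]
      exact fun s => Fintype.linearIndependent_iff.1 bW.linearIndependent aQ h5 s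
    rintro (i | s | s)
    · exact haP0 i
    · exact haQ0 s
    · exact haR0 s
  -- conclusion
  have hcard : Fintype.card (Fin d ⊕ (Fin t ⊕ Fin t)) ≤ Module.finrank ℂ (matCentralizer x) := by
    let F' : (Fin d ⊕ (Fin t ⊕ Fin t)) → matCentralizer x := fun i => ⟨F i, hmemF i⟩
    have h7 : LinearIndependent ℂ F' :=
      LinearIndependent.of_comp (matCentralizer x).subtype hindF
    exact h7.fintype_card_le_finrank
  simp only [Fintype.card_sum, Fintype.card_fin] at hcard
  omega

end Key

/-- Let `x ∈ gl(n+1,ℂ)` be a regular nilpotent element contained in the upper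
triangular Borel subalgebra `b₊` (so `x` is strictly upper triangular, nilpotent
and its centralizer has dimension `n+1`).  Then the corner `xₙ ∈ gl(n,ℂ)` is
regular nilpotent and `z_{gl(n)}(xₙ) ∩ z_{gl(n+1)}(x) = 0`. -/
theorem stmt15 (n : ℕ) (x : Matrix (Fin (n + 1)) (Fin (n + 1)) ℂ)
    (hupper : ∀ i j : Fin (n + 1), (j : ℕ) ≤ (i : ℕ) → x i j = 0)
    (hnil : IsNilpotent x)
    (hreg : Module.finrank ℂ (matCentralizer x) = n + 1) :
    IsNilpotent (ulCorner (Nat.le_succ n) x) ∧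
    Module.finrank ℂ (matCentralizer (ulCorner (Nat.le_succ n) x)) = n ∧
    ∀ z : Matrix (Fin n) (Fin n) ℂ,
      z * ulCorner (Nat.le_succ n) x = ulCorner (Nat.le_succ n) x * z →
      matEmbed z * x = x * matEmbed z →
      z = 0 := by
  -- all superdiagonal entries of x are nonzero
  have hsd : ∀ (k : ℕ) (h : k + 1 < n + 1), x ⟨k, by omega⟩ ⟨k + 1, h⟩ ≠ 0 := by
    intro k hk hzero
    have hxn : x ^ ((n + 1) - 1) = 0 := by
      ext i j
      show (x ^ n) i j = 0
      rcases Nat.lt_or_ge ((j : ℕ)) ((i : ℕ) + n) with h | h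
      · exact su_pow_entry x hupper n i j h
      · have hi0 : (i : ℕ) = 0 := by have := j.isLt; omega
        have hjn : (j : ℕ) = n := by have := j.isLt; omega
        have hprod : (∏ s : Fin n, x ⟨0 + (s : ℕ), by omega⟩ ⟨0 + (s : ℕ) + 1, by omega⟩)
            = 0 := by
          apply Finset.prod_eq_zero (Finset.mem_univ (⟨k, by omega⟩ : Fin n))
          convert hzero using 2 <;> simp
        have h5 := su_pow_superdiag x hupper n 0 (by omega)
        rw [hprod] at h5
        have e : i = ⟨0, by omega⟩ := by apply Fin.ext; simpa using hi0
        have e2 : j = (⟨0 + n, by omega⟩ : Fin (n + 1)) := by apply Fin.ext; simpa using hjn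
        simp only [e, e2]
        exact h5
    have hkey := key_lower_bound (by omega) x hxn
    rw [hreg] at hkey
    omega
  set y := ulCorner (Nat.le_succ n) x with hy
  have hyu : ∀ i j : Fin n, (j : ℕ) ≤ (i : ℕ) → y i j = 0 := by
    intro i j h
    exact hupper _ _ h
  have hys : ∀ (k : ℕ) (h : k + 1 < n), y ⟨k, by omega⟩ ⟨k + 1, h⟩ ≠ 0 := by
    intro k h
    exact hsd k (by omega)
  refine ⟨⟨n, su_pow_eq_zero y hyu⟩, ?_, ?_⟩
  · rcases Nat.eq_zero_or_pos n with h0 | hpos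
    · subst h0
      haveI hsub : Subsingleton (Matrix (Fin 0) (Fin 0) ℂ) := by
        constructor
        intro A B
        ext i j
        exact i.elim0
      haveI : Subsingleton (matCentralizer y) :=
        ⟨fun A B => Subtype.ext (Subsingleton.elim _ _)⟩
      exact Module.finrank_zero_of_subsingleton
    · exact centralizer_finrank_eq hpos y hyu hys
  · intro z hz1 hz2
    obtain ⟨a, haeq⟩ := commutant_eq_poly (Nat.succ_pos n) x hupper hsd (matEmbed z) hz2.symm
    have hlastcol : ∀ i : Fin (n + 1), (matEmbed z) i ⟨n, by omega⟩ = 0 := by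
      intro i
      simp only [matEmbed, Matrix.of_apply]
      split_ifs with h1 h2
      · exact absurd h2 (lt_irrefl n)
      · rfl
      · rfl
    have hBa : Bmat (Nat.succ_pos n) x *ᵥ a = 0 := by
      funext i
      have h1 := congrFun (congrFun haeq.symm i) ⟨n, by omega⟩
      rw [hlastcol i] at h1
      simpa only [Matrix.sum_apply, Matrix.smul_apply, smul_eq_mul,
        Matrix.mulVec, dotProduct, Bmat, Matrix.of_apply, Pi.zero_apply,
        mul_comm, Nat.succ_sub_one] using h1
    have ha0 : a = 0 := by
      have h2 := congrArg (fun v => (Bmat (Nat.succ_pos n) x)⁻¹ *ᵥ v) hBa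
      simpa [Matrix.mulVec_mulVec,
        Matrix.nonsing_inv_mul _ (Bmat_isUnit (Nat.succ_pos n) x hupper hsd),
        Matrix.mulVec_zero, Matrix.one_mulVec] using h2
    have hME : matEmbed z = 0 := by
      rw [haeq]
      apply Finset.sum_eq_zero
      intro j _
      rw [ha0]
      simp
    ext i j
    have h3 : matEmbed z ⟨(i : ℕ), by omega⟩ ⟨(j : ℕ), by omega⟩ = z i j := by
      simp only [matEmbed, Matrix.of_apply]
      rw [dif_pos i.isLt, dif_pos j.isLt]
    rw [← h3, hME]
    rfl
end
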